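/- arXiv:1604.05757 — 5 statements merged into one kernel-verified Lean document; each statement's English description precedes it below -/
import Mathlib

section
/- Every tree with at least one edge, viewed as a bipartite graph (i.e., as a 2-regular bipartite 2-prover question set with parts given by its bipartition), is constructible by conditioning. -/
/-- The class of bipartite graphs (presented by part types `X`, `Y`, vertex sets
`vx ⊆ X`, `vy ⊆ Y`, and an edge set `E ⊆ X × Y`) that are constructible by
conditioning, together with the number of doubling steps used.

* `single`: a single edge is constructible (0 doublings);
* `double`: doubling the old vertices `ox ⊆ vx`, `oy ⊆ vy` (the remaining vertices
  being fixed) adds a fresh copy of every old vertex, and for every edge that is not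
  entirely fixed, a new edge in which every old endpoint is replaced by its copy;
* `collapse`: if some homomorphism of the graph into the induced subgraph on
  `px ⊆ vx`, `py ⊆ vy` is the identity on `px ∪ py`, then that induced subgraph
  is constructible;
* `iso`: the class is closed under isomorphic re-presentation of a graph
  (injectively re-embedding the two parts). -/
inductive ConstructibleBip :
    ∀ (X Y : Type), Set X → Set Y → Set (X × Y) → ℕ → Prop where
  | single (X Y : Type) (x : X) (y : Y) :
      ConstructibleBip X Y {x} {y} {(x, y)} 0
  | double (X Y : Type) (vx : Set X) (vy : Set Y) (E : Set (X × Y))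
      (ox : Set X) (oy : Set Y) (k : ℕ)
      (hox : ox ⊆ vx) (hoy : oy ⊆ vy)
      (h : ConstructibleBip X Y vx vy E k) :
      ConstructibleBip (X ⊕ X) (Y ⊕ Y)
        (Sum.inl '' vx ∪ Sum.inr '' ox) (Sum.inl '' vy ∪ Sum.inr '' oy)
        ({ e' | ∃ e ∈ E, e' = (Sum.inl e.1, Sum.inl e.2) } ∪
         { e' | ∃ e ∈ E, (e.1 ∈ ox ∨ e.2 ∈ oy) ∧
            ((e.1 ∈ ox ∧ e'.1 = Sum.inr e.1) ∨ (e.1 ∉ ox ∧ e'.1 = Sum.inl e.1)) ∧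
            ((e.2 ∈ oy ∧ e'.2 = Sum.inr e.2) ∨ (e.2 ∉ oy ∧ e'.2 = Sum.inl e.2)) })
        (k + 1)
  | collapse (X Y : Type) (vx px : Set X) (vy py : Set Y) (E : Set (X × Y)) (k : ℕ)
      (fx : X → X) (fy : Y → Y)
      (hpx : px ⊆ vx) (hpy : py ⊆ vy)
      (hhom : ∀ e ∈ E, (fx e.1, fy e.2) ∈ { e ∈ E | e.1 ∈ px ∧ e.2 ∈ py })
      (hfixx : ∀ v ∈ px, fx v = v) (hfixy : ∀ v ∈ py, fy v = v)
      (h : ConstructibleBip X Y vx vy E k) :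
      ConstructibleBip X Y px py { e ∈ E | e.1 ∈ px ∧ e.2 ∈ py } k
  | iso (X Y X' Y' : Type) (vx : Set X) (vy : Set Y) (E : Set (X × Y)) (k : ℕ)
      (φx : X → X') (φy : Y → Y')
      (hinjx : Set.InjOn φx vx) (hinjy : Set.InjOn φy vy)
      (h : ConstructibleBip X Y vx vy E k) :
      ConstructibleBip X' Y' (φx '' vx) (φy '' vy)
        { e' | ∃ e ∈ E, e' = (φx e.1, φy e.2) } k
/-- The simple graph on `X ⊕ Y` underlying a bipartite graph with parts `X`, `Y`
and edge set `E ⊆ X × Y`. -/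
def bipGraph {X Y : Type} (E : Finset (X × Y)) : SimpleGraph (X ⊕ Y) where
  Adj u v := (∃ p ∈ E, u = Sum.inl p.1 ∧ v = Sum.inr p.2) ∨
    (∃ p ∈ E, u = Sum.inr p.2 ∧ v = Sum.inl p.1)
  symm := by
    constructor
    rintro u v (⟨p, hp, rfl, rfl⟩ | ⟨p, hp, rfl, rfl⟩)
    · exact Or.inr ⟨p, hp, rfl, rfl⟩
    · exact Or.inl ⟨p, hp, rfl, rfl⟩
  loopless := by
    constructor
    rintro u (⟨p, hp, h1, h2⟩ | ⟨p, hp, h1, h2⟩) <;> subst h1 <;> simp_all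

section Aux14

open Sum

variable {X Y : Type}

private lemma cb_congr14 {X Y : Type} {vx vx' : Set X} {vy vy' : Set Y} {E E' : Set (X × Y)}
    {k : ℕ} (h : ConstructibleBip X Y vx vy E k) (h1 : vx = vx') (h2 : vy = vy')
    (h3 : E = E') : ConstructibleBip X Y vx' vy' E' k := by
  subst h1; subst h2; subst h3; exact h

private inductive TB14 [DecidableEq X] [DecidableEq Y] : Finset (X × Y) → Prop
  | single (x : X) (y : Y) : TB14 {(x, y)}
  | addY (E : Finset (X × Y)) (x : X) (y : Y) (hx : x ∈ E.image Prod.fst)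
      (hy : y ∉ E.image Prod.snd) (h : TB14 E) : TB14 (insert (x, y) E)
  | addX (E : Finset (X × Y)) (x : X) (y : Y) (hx : x ∉ E.image Prod.fst)
      (hy : y ∈ E.image Prod.snd) (h : TB14 E) : TB14 (insert (x, y) E)

private lemma tb14_constructible [DecidableEq X] [DecidableEq Y] {E : Finset (X × Y)}
    (h : TB14 E) :
    ∃ k, ConstructibleBip X Y ↑(E.image Prod.fst) ↑(E.image Prod.snd) ↑E k := by
  induction h with
  | single x y =>
      refine ⟨0, cb_congr14 (ConstructibleBip.single X Y x y) ?_ ?_ ?_⟩ <;> simp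
  | addY E x y hx hy _h ih =>
      obtain ⟨k, hk⟩ := ih
      obtain ⟨e₀, he₀, hx₀⟩ := Finset.mem_image.mp hx
      set y₀ := e₀.2 with hy₀def
      have hxy₀ : (x, y₀) ∈ E := by
        have hpe : (x, y₀) = e₀ := Prod.ext hx₀.symm rfl
        rwa [hpe]
      have hxvx : x ∈ (↑(E.image Prod.fst) : Set X) := Finset.mem_coe.mpr hx
      have hy₀vy : y₀ ∈ (↑(E.image Prod.snd) : Set Y) :=
        Finset.mem_coe.mpr (Finset.mem_image_of_mem Prod.snd he₀)
      have hfst : ∀ e ∈ (↑E : Set (X × Y)), e.1 ∈ (↑(E.image Prod.fst) : Set X) :=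
        fun e he => Finset.mem_coe.mpr (Finset.mem_image_of_mem _ (Finset.mem_coe.mp he))
      have hsnd : ∀ e ∈ (↑E : Set (X × Y)), e.2 ∈ (↑(E.image Prod.snd) : Set Y) :=
        fun e he => Finset.mem_coe.mpr (Finset.mem_image_of_mem _ (Finset.mem_coe.mp he))
      have hynvy : y ∉ (↑(E.image Prod.snd) : Set Y) := fun hc => hy (Finset.mem_coe.mp hc)
      have h2 := ConstructibleBip.double X Y (↑(E.image Prod.fst)) (↑(E.image Prod.snd)) ↑E
        ((↑(E.image Prod.fst) : Set X) \ {x}) (↑(E.image Prod.snd)) k Set.diff_subset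
        subset_rfl hk
      have h3 : ConstructibleBip (X ⊕ X) (Y ⊕ Y) (Sum.inl '' ↑(E.image Prod.fst))
          (Sum.inl '' ↑(E.image Prod.snd) ∪ {Sum.inr y₀})
          ({ e' : (X ⊕ X) × (Y ⊕ Y) | ∃ e ∈ (↑E : Set (X × Y)),
              e' = (Sum.inl e.1, Sum.inl e.2) } ∪ {(Sum.inl x, Sum.inr y₀)}) (k + 1) := by
        refine cb_congr14
          (ConstructibleBip.collapse _ _ _ _ _ _ _ _
            (Sum.elim Sum.inl fun _ => Sum.inl x) (Sum.elim Sum.inl fun _ => Sum.inr y₀)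
            ?_ ?_ ?_ ?_ ?_ h2) rfl rfl ?_
        · exact Set.subset_union_left
        · rintro z (hz | hz)
          · exact Or.inl hz
          · rw [Set.mem_singleton_iff] at hz; subst hz
            exact Or.inr ⟨y₀, hy₀vy, rfl⟩
        · rintro e' (⟨e, he, rfl⟩ | ⟨e, he, -, h1, hcond2⟩)
          · exact ⟨Or.inl ⟨e, he, rfl⟩, ⟨e.1, hfst e he, rfl⟩, Or.inl ⟨e.2, hsnd e he, rfl⟩⟩
          · have h2' : e'.2 = Sum.inr e.2 := by
              rcases hcond2 with ⟨-, h⟩ | ⟨hn, -⟩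
              · exact h
              · exact absurd (hsnd e he) hn
            have hval : ((Sum.elim Sum.inl fun _ => Sum.inl x : X ⊕ X → X ⊕ X) e'.1,
                (Sum.elim Sum.inl fun _ => Sum.inr y₀ : Y ⊕ Y → Y ⊕ Y) e'.2)
                = (Sum.inl x, Sum.inr y₀) := by
              have hx1 : (Sum.elim Sum.inl fun _ => Sum.inl x : X ⊕ X → X ⊕ X) e'.1
                  = Sum.inl x := by
                rcases h1 with ⟨-, h⟩ | ⟨hn, h⟩
                · rw [h]; rfl
                · have hex : e.1 = x := by
                    by_contra hne
                    exact hn ⟨hfst e he, hne⟩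
                  rw [h, hex]; rfl
              rw [hx1, h2']; rfl
            rw [hval]
            exact ⟨Or.inr ⟨(x, y₀), hxy₀, Or.inr hy₀vy, Or.inr ⟨by simp, rfl⟩,
              Or.inl ⟨hy₀vy, rfl⟩⟩, ⟨x, hxvx, rfl⟩, Or.inr rfl⟩
        · rintro v ⟨a, ha, rfl⟩; rfl
        · rintro v (⟨b, hb, rfl⟩ | hv)
          · rfl
          · rw [Set.mem_singleton_iff] at hv; subst hv; rfl
        · ext e'
          constructor
          · rintro ⟨he', hp1, hp2⟩
            rcases he' with ⟨e, he, rfl⟩ | ⟨e, he, -, h1, hcond2⟩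
            · exact Or.inl ⟨e, he, rfl⟩
            · have h2' : e'.2 = Sum.inr e.2 := by
                rcases hcond2 with ⟨-, h⟩ | ⟨hn, -⟩
                · exact h
                · exact absurd (hsnd e he) hn
              have h1' : e'.1 = Sum.inl e.1 ∧ e.1 ∉ (↑(E.image Prod.fst) : Set X) \ {x} := by
                rcases h1 with ⟨-, h⟩ | ⟨hn, h⟩
                · exfalso; rw [h] at hp1
                  rcases hp1 with ⟨a, -, ha⟩
                  exact Sum.inl_ne_inr ha
                · exact ⟨h, hn⟩
              have hex : e.1 = x := by
                by_contra hne
                exact h1'.2 ⟨hfst e he, hne⟩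
              have hey : e.2 = y₀ := by
                rw [h2'] at hp2
                rcases hp2 with ⟨b, -, hb⟩ | hb
                · exact absurd hb Sum.inl_ne_inr
                · rw [Set.mem_singleton_iff] at hb
                  exact Sum.inr_injective hb
              right
              show e' = (Sum.inl x, Sum.inr y₀)
              refine Prod.ext ?_ ?_
              · rw [h1'.1, hex]
              · rw [h2', hey]
          · rintro (⟨e, he, rfl⟩ | he')
            · exact ⟨Or.inl ⟨e, he, rfl⟩, ⟨e.1, hfst e he, rfl⟩, Or.inl ⟨e.2, hsnd e he, rfl⟩⟩
            · rw [Set.mem_singleton_iff] at he'; subst he'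
              exact ⟨Or.inr ⟨(x, y₀), hxy₀, Or.inr hy₀vy, Or.inr ⟨by simp, rfl⟩,
                Or.inl ⟨hy₀vy, rfl⟩⟩, ⟨x, hxvx, rfl⟩, Or.inr rfl⟩
      refine ⟨k + 1, cb_congr14 (ConstructibleBip.iso _ _ X Y _ _ _ _
        (Sum.elim id fun _ => x) (Sum.elim id fun _ => y) ?_ ?_ h3) ?_ ?_ ?_⟩
      · rintro u ⟨a, ha, rfl⟩ v ⟨b, hb, rfl⟩ hab
        simp only [Sum.elim_inl, id_eq] at hab
        rw [hab]
      · rintro u hu v hv huv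
        rcases hu with ⟨a, ha, rfl⟩ | hu
        · rcases hv with ⟨b, hb, rfl⟩ | hv
          · simp only [Sum.elim_inl, id_eq] at huv; rw [huv]
          · rw [Set.mem_singleton_iff] at hv; subst hv
            simp only [Sum.elim_inl, Sum.elim_inr, id_eq] at huv
            exact absurd (huv ▸ ha) hynvy
        · rw [Set.mem_singleton_iff] at hu; subst hu
          rcases hv with ⟨b, hb, rfl⟩ | hv
          · simp only [Sum.elim_inl, Sum.elim_inr, id_eq] at huv
            exact absurd (huv ▸ hb) hynvy
          · rw [Set.mem_singleton_iff] at hv; subst hv; rfl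
      · ext a
        constructor
        · rintro ⟨-, ⟨b, hb, rfl⟩, rfl⟩
          exact Finset.mem_coe.mpr
            (Finset.image_subset_image (Finset.subset_insert _ _) (Finset.mem_coe.mp hb))
        · intro ha
          obtain ⟨e, he, rfl⟩ := Finset.mem_image.mp (Finset.mem_coe.mp ha)
          rcases Finset.mem_insert.mp he with rfl | heE
          · exact ⟨Sum.inl x, ⟨x, hxvx, rfl⟩, rfl⟩
          · exact ⟨Sum.inl e.1, ⟨e.1, Finset.mem_coe.mpr (Finset.mem_image_of_mem _ heE),
              rfl⟩, rfl⟩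
      · ext b
        constructor
        · rintro ⟨u, hu, rfl⟩
          rcases hu with ⟨c, hc, rfl⟩ | hu
          · exact Finset.mem_coe.mpr
              (Finset.image_subset_image (Finset.subset_insert _ _) (Finset.mem_coe.mp hc))
          · rw [Set.mem_singleton_iff] at hu; subst hu
            exact Finset.mem_coe.mpr (Finset.mem_image.mpr ⟨(x, y), Finset.mem_insert_self _ _, rfl⟩)
        · intro hb
          obtain ⟨e, he, rfl⟩ := Finset.mem_image.mp (Finset.mem_coe.mp hb)
          rcases Finset.mem_insert.mp he with rfl | heE
          · exact ⟨Sum.inr y₀, Or.inr rfl, rfl⟩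
          · exact ⟨Sum.inl e.2, Or.inl ⟨e.2, Finset.mem_coe.mpr (Finset.mem_image_of_mem _ heE),
              rfl⟩, rfl⟩
      · ext e'
        constructor
        · rintro ⟨f, hf, rfl⟩
          rcases hf with ⟨e, he, rfl⟩ | hf
          · exact Finset.mem_coe.mpr (Finset.mem_insert_of_mem he)
          · rw [Set.mem_singleton_iff] at hf; subst hf
            exact Finset.mem_coe.mpr (Finset.mem_insert_self _ _)
        · intro h
          rcases Finset.mem_insert.mp (Finset.mem_coe.mp h) with h' | heE
          · subst h'
            exact ⟨(Sum.inl x, Sum.inr y₀), Or.inr rfl, rfl⟩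
          · exact ⟨(Sum.inl e'.1, Sum.inl e'.2), Or.inl ⟨e', heE, rfl⟩, rfl⟩
  | addX E x y hx hy _h ih =>
      obtain ⟨k, hk⟩ := ih
      obtain ⟨e₀, he₀, hy₀⟩ := Finset.mem_image.mp hy
      set x₀ := e₀.1 with hx₀def
      have hxy₀ : (x₀, y) ∈ E := by
        have hpe : (x₀, y) = e₀ := Prod.ext rfl hy₀.symm
        rwa [hpe]
      have hyvy : y ∈ (↑(E.image Prod.snd) : Set Y) := Finset.mem_coe.mpr hy
      have hx₀vx : x₀ ∈ (↑(E.image Prod.fst) : Set X) :=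
        Finset.mem_coe.mpr (Finset.mem_image_of_mem Prod.fst he₀)
      have hfst : ∀ e ∈ (↑E : Set (X × Y)), e.1 ∈ (↑(E.image Prod.fst) : Set X) :=
        fun e he => Finset.mem_coe.mpr (Finset.mem_image_of_mem _ (Finset.mem_coe.mp he))
      have hsnd : ∀ e ∈ (↑E : Set (X × Y)), e.2 ∈ (↑(E.image Prod.snd) : Set Y) :=
        fun e he => Finset.mem_coe.mpr (Finset.mem_image_of_mem _ (Finset.mem_coe.mp he))
      have hxnvx : x ∉ (↑(E.image Prod.fst) : Set X) := fun hc => hx (Finset.mem_coe.mp hc)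
      have h2 := ConstructibleBip.double X Y (↑(E.image Prod.fst)) (↑(E.image Prod.snd)) ↑E
        (↑(E.image Prod.fst)) ((↑(E.image Prod.snd) : Set Y) \ {y}) k subset_rfl
        Set.diff_subset hk
      have h3 : ConstructibleBip (X ⊕ X) (Y ⊕ Y)
          (Sum.inl '' ↑(E.image Prod.fst) ∪ {Sum.inr x₀})
          (Sum.inl '' ↑(E.image Prod.snd))
          ({ e' : (X ⊕ X) × (Y ⊕ Y) | ∃ e ∈ (↑E : Set (X × Y)),
              e' = (Sum.inl e.1, Sum.inl e.2) } ∪ {(Sum.inr x₀, Sum.inl y)}) (k + 1) := by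
        refine cb_congr14
          (ConstructibleBip.collapse _ _ _ _ _ _ _ _
            (Sum.elim Sum.inl fun _ => Sum.inr x₀) (Sum.elim Sum.inl fun _ => Sum.inl y)
            ?_ ?_ ?_ ?_ ?_ h2) rfl rfl ?_
        · rintro z (hz | hz)
          · exact Or.inl hz
          · rw [Set.mem_singleton_iff] at hz; subst hz
            exact Or.inr ⟨x₀, hx₀vx, rfl⟩
        · exact Set.subset_union_left
        · rintro e' (⟨e, he, rfl⟩ | ⟨e, he, -, h1, hcond2⟩)
          · exact ⟨Or.inl ⟨e, he, rfl⟩, Or.inl ⟨e.1, hfst e he, rfl⟩, ⟨e.2, hsnd e he, rfl⟩⟩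
          · have h1' : e'.1 = Sum.inr e.1 := by
              rcases h1 with ⟨-, h⟩ | ⟨hn, -⟩
              · exact h
              · exact absurd (hfst e he) hn
            have hval : ((Sum.elim Sum.inl fun _ => Sum.inr x₀ : X ⊕ X → X ⊕ X) e'.1,
                (Sum.elim Sum.inl fun _ => Sum.inl y : Y ⊕ Y → Y ⊕ Y) e'.2)
                = (Sum.inr x₀, Sum.inl y) := by
              have hy1 : (Sum.elim Sum.inl fun _ => Sum.inl y : Y ⊕ Y → Y ⊕ Y) e'.2
                  = Sum.inl y := by
                rcases hcond2 with ⟨-, h⟩ | ⟨hn, h⟩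
                · rw [h]; rfl
                · have hey : e.2 = y := by
                    by_contra hne
                    exact hn ⟨hsnd e he, hne⟩
                  rw [h, hey]; rfl
              rw [hy1, h1']; rfl
            rw [hval]
            exact ⟨Or.inr ⟨(x₀, y), hxy₀, Or.inl hx₀vx, Or.inl ⟨hx₀vx, rfl⟩,
              Or.inr ⟨by simp, rfl⟩⟩, Or.inr rfl, ⟨y, hyvy, rfl⟩⟩
        · rintro v (⟨a, ha, rfl⟩ | hv)
          · rfl
          · rw [Set.mem_singleton_iff] at hv; subst hv; rfl
        · rintro v ⟨b, hb, rfl⟩; rfl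
        · ext e'
          constructor
          · rintro ⟨he', hp1, hp2⟩
            rcases he' with ⟨e, he, rfl⟩ | ⟨e, he, -, h1, hcond2⟩
            · exact Or.inl ⟨e, he, rfl⟩
            · have h1' : e'.1 = Sum.inr e.1 := by
                rcases h1 with ⟨-, h⟩ | ⟨hn, -⟩
                · exact h
                · exact absurd (hfst e he) hn
              have hex : e.1 = x₀ := by
                rw [h1'] at hp1
                rcases hp1 with ⟨a, -, ha⟩ | ha
                · exact absurd ha Sum.inl_ne_inr
                · rw [Set.mem_singleton_iff] at ha
                  exact Sum.inr_injective ha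
              have h2' : e'.2 = Sum.inl e.2 ∧ e.2 ∉ (↑(E.image Prod.snd) : Set Y) \ {y} := by
                rcases hcond2 with ⟨-, h⟩ | ⟨hn, h⟩
                · exfalso; rw [h] at hp2
                  rcases hp2 with ⟨b, -, hb⟩
                  exact Sum.inl_ne_inr hb
                · exact ⟨h, hn⟩
              have hey : e.2 = y := by
                by_contra hne
                exact h2'.2 ⟨hsnd e he, hne⟩
              right
              show e' = (Sum.inr x₀, Sum.inl y)
              refine Prod.ext ?_ ?_
              · rw [h1', hex]
              · rw [h2'.1, hey]
          · rintro (⟨e, he, rfl⟩ | he')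
            · exact ⟨Or.inl ⟨e, he, rfl⟩, Or.inl ⟨e.1, hfst e he, rfl⟩, ⟨e.2, hsnd e he, rfl⟩⟩
            · rw [Set.mem_singleton_iff] at he'; subst he'
              exact ⟨Or.inr ⟨(x₀, y), hxy₀, Or.inl hx₀vx, Or.inl ⟨hx₀vx, rfl⟩,
                Or.inr ⟨by simp, rfl⟩⟩, Or.inr rfl, ⟨y, hyvy, rfl⟩⟩
      refine ⟨k + 1, cb_congr14 (ConstructibleBip.iso _ _ X Y _ _ _ _
        (Sum.elim id fun _ => x) (Sum.elim id fun _ => y) ?_ ?_ h3) ?_ ?_ ?_⟩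
      · rintro u hu v hv huv
        rcases hu with ⟨a, ha, rfl⟩ | hu
        · rcases hv with ⟨b, hb, rfl⟩ | hv
          · simp only [Sum.elim_inl, id_eq] at huv; rw [huv]
          · rw [Set.mem_singleton_iff] at hv; subst hv
            simp only [Sum.elim_inl, Sum.elim_inr, id_eq] at huv
            exact absurd (huv ▸ ha) hxnvx
        · rw [Set.mem_singleton_iff] at hu; subst hu
          rcases hv with ⟨b, hb, rfl⟩ | hv
          · simp only [Sum.elim_inl, Sum.elim_inr, id_eq] at huv
            exact absurd (huv ▸ hb) hxnvx
          · rw [Set.mem_singleton_iff] at hv; subst hv; rfl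
      · rintro u ⟨a, ha, rfl⟩ v ⟨b, hb, rfl⟩ hab
        simp only [Sum.elim_inl, id_eq] at hab
        rw [hab]
      · ext a
        constructor
        · rintro ⟨u, hu, rfl⟩
          rcases hu with ⟨c, hc, rfl⟩ | hu
          · exact Finset.mem_coe.mpr
              (Finset.image_subset_image (Finset.subset_insert _ _) (Finset.mem_coe.mp hc))
          · rw [Set.mem_singleton_iff] at hu; subst hu
            exact Finset.mem_coe.mpr (Finset.mem_image.mpr ⟨(x, y), Finset.mem_insert_self _ _, rfl⟩)
        · intro ha
          obtain ⟨e, he, rfl⟩ := Finset.mem_image.mp (Finset.mem_coe.mp ha)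
          rcases Finset.mem_insert.mp he with rfl | heE
          · exact ⟨Sum.inr x₀, Or.inr rfl, rfl⟩
          · exact ⟨Sum.inl e.1, Or.inl ⟨e.1, Finset.mem_coe.mpr (Finset.mem_image_of_mem _ heE),
              rfl⟩, rfl⟩
      · ext b
        constructor
        · rintro ⟨-, ⟨c, hc, rfl⟩, rfl⟩
          exact Finset.mem_coe.mpr
            (Finset.image_subset_image (Finset.subset_insert _ _) (Finset.mem_coe.mp hc))
        · intro hb
          obtain ⟨e, he, rfl⟩ := Finset.mem_image.mp (Finset.mem_coe.mp hb)
          rcases Finset.mem_insert.mp he with rfl | heE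
          · exact ⟨Sum.inl y, ⟨y, hyvy, rfl⟩, rfl⟩
          · exact ⟨Sum.inl e.2, ⟨e.2, Finset.mem_coe.mpr (Finset.mem_image_of_mem _ heE),
              rfl⟩, rfl⟩
      · ext e'
        constructor
        · rintro ⟨f, hf, rfl⟩
          rcases hf with ⟨e, he, rfl⟩ | hf
          · exact Finset.mem_coe.mpr (Finset.mem_insert_of_mem he)
          · rw [Set.mem_singleton_iff] at hf; subst hf
            exact Finset.mem_coe.mpr (Finset.mem_insert_self _ _)
        · intro h
          rcases Finset.mem_insert.mp (Finset.mem_coe.mp h) with h' | heE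
          · subst h'
            exact ⟨(Sum.inr x₀, Sum.inl y), Or.inr rfl, rfl⟩
          · exact ⟨(Sum.inl e'.1, Sum.inl e'.2), Or.inl ⟨e', heE, rfl⟩, rfl⟩


private lemma reach_closed14 {V : Type} {G : SimpleGraph V} {S : V → Prop}
    (hS : ∀ a b, S a → G.Adj a b → S b) {u v : V} (p : G.Walk u v) (hu : S u) : S v := by
  induction p with
  | nil => exact hu
  | cons h q ih => exact ih (hS _ _ hu h)

private lemma path_avoid14 {V : Type} [DecidableEq V] {G : SimpleGraph V} {u w c d : V}
    (hnbr : ∀ z, G.Adj c z → z = d) {p : G.Walk u w} (hp : p.IsPath)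
    (hu : u ≠ c) (hw : w ≠ c) : c ∉ p.support := by
  intro hc
  have hspec := p.take_spec hc
  have hnodup : ((p.takeUntil c hc).support ++ (p.dropUntil c hc).support.tail).Nodup := by
    rw [← SimpleGraph.Walk.support_append, hspec]; exact hp.support_nodup
  obtain ⟨a, hadj, q', hq'⟩ := SimpleGraph.Walk.not_nil_iff.mp
    (SimpleGraph.Walk.not_nil_of_ne (Ne.symm hu) :
      ¬ ((p.takeUntil c hc).reverse).Nil)
  have ha : a = d := hnbr a hadj
  have haq : d ∈ (p.takeUntil c hc).support := by
    have h1 : a ∈ ((p.takeUntil c hc).reverse).support := by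
      rw [hq', SimpleGraph.Walk.support_cons]
      exact List.mem_cons_of_mem _ q'.start_mem_support
    rw [SimpleGraph.Walk.support_reverse, List.mem_reverse] at h1
    rwa [ha] at h1
  obtain ⟨b, hadj', r', hr'⟩ := SimpleGraph.Walk.not_nil_iff.mp
    (SimpleGraph.Walk.not_nil_of_ne (Ne.symm hw) : ¬ (p.dropUntil c hc).Nil)
  have hb : b = d := hnbr b hadj'
  have hbr : d ∈ (p.dropUntil c hc).support.tail := by
    rw [hr', SimpleGraph.Walk.support_cons, List.tail_cons]
    rw [← hb]; exact r'.start_mem_support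
  exact (List.nodup_append'.mp hnodup).2.2 haq hbr

private lemma build14 [DecidableEq X] [DecidableEq Y] (n : ℕ) :
    ∀ E : Finset (X × Y), E.card = n → E.Nonempty →
      E.card + 1 = (E.image Prod.fst).card + (E.image Prod.snd).card →
      (∀ u w : X ⊕ Y,
        Sum.elim (· ∈ E.image Prod.fst) (· ∈ E.image Prod.snd) u →
        Sum.elim (· ∈ E.image Prod.fst) (· ∈ E.image Prod.snd) w →
        (bipGraph E).Reachable u w) →
      TB14 E := by
  induction n using Nat.strong_induction_on with
  | _ n ih =>
    intro E hcard hne hcount hconn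
    rcases Nat.lt_or_ge E.card 2 with hlt | hge
    · have h1 : E.card = 1 := by
        have := Finset.card_pos.mpr hne; omega
      obtain ⟨e, he⟩ := Finset.card_eq_one.mp h1
      subst he
      obtain ⟨a, b⟩ := e
      exact TB14.single a b
    · have hfib : (∃ z₀ ∈ E.image Prod.snd, (E.filter fun e => Prod.snd e = z₀).card = 1) ∨
          (∃ z₀ ∈ E.image Prod.fst, (E.filter fun e => Prod.fst e = z₀).card = 1) := by
        by_contra hcon
        push_neg at hcon
        obtain ⟨hY, hX⟩ := hcon
        have h2Y : ∀ b ∈ E.image Prod.snd, 2 ≤ (E.filter fun e => Prod.snd e = b).card := by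
          intro b hb
          have hpos : 0 < (E.filter fun e' => Prod.snd e' = b).card := by
            obtain ⟨e, he, rfl⟩ := Finset.mem_image.mp hb
            exact Finset.card_pos.mpr ⟨e, Finset.mem_filter.mpr ⟨he, rfl⟩⟩
          have := hY b hb
          omega
        have h2X : ∀ a ∈ E.image Prod.fst, 2 ≤ (E.filter fun e => Prod.fst e = a).card := by
          intro a ha
          have hpos : 0 < (E.filter fun e' => Prod.fst e' = a).card := by
            obtain ⟨e, he, rfl⟩ := Finset.mem_image.mp ha
            exact Finset.card_pos.mpr ⟨e, Finset.mem_filter.mpr ⟨he, rfl⟩⟩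
          have := hX a ha
          omega
        have hsY : E.card = ∑ b ∈ E.image Prod.snd, (E.filter fun e => Prod.snd e = b).card :=
          Finset.card_eq_sum_card_image Prod.snd E
        have hsX : E.card = ∑ a ∈ E.image Prod.fst, (E.filter fun e => Prod.fst e = a).card :=
          Finset.card_eq_sum_card_image Prod.fst E
        have hgeY : (E.image Prod.snd).card * 2 ≤ E.card := by
          rw [hsY]
          calc (E.image Prod.snd).card * 2 = ∑ _b ∈ E.image Prod.snd, 2 := by
                rw [Finset.sum_const, smul_eq_mul]
            _ ≤ ∑ b ∈ E.image Prod.snd, (E.filter fun e => Prod.snd e = b).card :=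
                Finset.sum_le_sum h2Y
        have hgeX : (E.image Prod.fst).card * 2 ≤ E.card := by
          rw [hsX]
          calc (E.image Prod.fst).card * 2 = ∑ _a ∈ E.image Prod.fst, 2 := by
                rw [Finset.sum_const, smul_eq_mul]
            _ ≤ ∑ a ∈ E.image Prod.fst, (E.filter fun e => Prod.fst e = a).card :=
                Finset.sum_le_sum h2X
        omega
      rcases hfib with ⟨z₀, hz₀img, hfib1⟩ | ⟨z₀, hz₀img, hfib1⟩
      · -- leaf on the Y side
        obtain ⟨e₀, he₀eq⟩ := Finset.card_eq_one.mp hfib1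
        have he₀mem : e₀ ∈ E ∧ e₀.2 = z₀ := by
          have h : e₀ ∈ E.filter fun e => Prod.snd e = z₀ := by
            rw [he₀eq]; exact Finset.mem_singleton_self e₀
          exact Finset.mem_filter.mp h
        have huniq : ∀ e ∈ E, e.2 = z₀ → e = e₀ := fun e he h2 =>
          Finset.mem_singleton.mp (he₀eq ▸ Finset.mem_filter.mpr ⟨he, h2⟩)
        have hx₀img : e₀.1 ∈ E.image Prod.fst := Finset.mem_image_of_mem _ he₀mem.1
        have hdeg : ∃ e₁ ∈ E, e₁.1 = e₀.1 ∧ e₁ ≠ e₀ := by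
          by_contra hcon
          push_neg at hcon
          have hclosed : ∀ a b : X ⊕ Y, (a = Sum.inl e₀.1 ∨ a = Sum.inr z₀) →
              (bipGraph E).Adj a b → (b = Sum.inl e₀.1 ∨ b = Sum.inr z₀) := by
            rintro a b (rfl | rfl) (⟨p, hp, h1, rfl⟩ | ⟨p, hp, h1, rfl⟩)
            · have hp1 : p.1 = e₀.1 := (Sum.inl_injective h1).symm
              right; rw [hcon p hp hp1, he₀mem.2]
            · exact absurd h1 (by simp)
            · exact absurd h1 (by simp)
            · have hp2 : p.2 = z₀ := (Sum.inr_injective h1).symm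
              left; rw [huniq p hp hp2]
          have hall : ∀ e ∈ E, e = e₀ := by
            intro e he
            obtain ⟨p⟩ := hconn (Sum.inl e₀.1) (Sum.inl e.1) hx₀img
              (Finset.mem_image_of_mem _ he)
            rcases reach_closed14 hclosed p (Or.inl rfl) with h | h
            · exact hcon e he (Sum.inl_injective h)
            · exact absurd h (by simp)
          have hE1 : E = {e₀} := Finset.eq_singleton_iff_unique_mem.mpr ⟨he₀mem.1, hall⟩
          rw [hE1, Finset.card_singleton] at hge
          omega
        obtain ⟨e₁, he₁, he₁fst, he₁ne⟩ := hdeg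
        have he₁' : e₁ ∈ E.erase e₀ := Finset.mem_erase.mpr ⟨he₁ne, he₁⟩
        have himgfst : (E.erase e₀).image Prod.fst = E.image Prod.fst := by
          apply Finset.Subset.antisymm (Finset.image_subset_image (Finset.erase_subset _ _))
          intro a ha
          obtain ⟨e, he, rfl⟩ := Finset.mem_image.mp ha
          by_cases hcase : e = e₀
          · subst hcase
            exact Finset.mem_image.mpr ⟨e₁, he₁', he₁fst⟩
          · exact Finset.mem_image.mpr ⟨e, Finset.mem_erase.mpr ⟨hcase, he⟩, rfl⟩
        have himgsnd : (E.erase e₀).image Prod.snd = (E.image Prod.snd).erase z₀ := by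
          ext b
          constructor
          · intro hb
            obtain ⟨e, he, rfl⟩ := Finset.mem_image.mp hb
            obtain ⟨hene, heE⟩ := Finset.mem_erase.mp he
            refine Finset.mem_erase.mpr ⟨?_, Finset.mem_image_of_mem _ heE⟩
            intro hbz
            exact hene (huniq e heE hbz)
          · intro hb
            obtain ⟨hbne, hb'⟩ := Finset.mem_erase.mp hb
            obtain ⟨e, he, rfl⟩ := Finset.mem_image.mp hb'
            refine Finset.mem_image.mpr ⟨e, Finset.mem_erase.mpr ⟨?_, he⟩, rfl⟩
            rintro rfl
            exact hbne he₀mem.2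
        have he₀pair : e₀ = (e₀.1, z₀) := Prod.ext rfl he₀mem.2
        have hEeq : E = insert (e₀.1, z₀) (E.erase e₀) := by
          rw [← he₀pair, Finset.insert_erase he₀mem.1]
        rw [hEeq]
        refine TB14.addY _ _ _ ?_ ?_ ?_
        · rw [himgfst]; exact hx₀img
        · rw [himgsnd]; exact Finset.notMem_erase _ _
        · have hcard' : (E.erase e₀).card = E.card - 1 := Finset.card_erase_of_mem he₀mem.1
          have hz₀pos : 0 < (E.image Prod.snd).card := Finset.card_pos.mpr ⟨z₀, hz₀img⟩
          refine ih (n - 1) (by omega) _ (by omega) ⟨e₁, he₁'⟩ ?_ ?_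
          · rw [himgfst, himgsnd, Finset.card_erase_of_mem hz₀img, hcard']
            omega
          · intro u w hu hw
            have hz₀nmem : z₀ ∉ (E.erase e₀).image Prod.snd := by
              rw [himgsnd]; exact Finset.notMem_erase _ _
            have hune : u ≠ Sum.inr z₀ := by rintro rfl; exact hz₀nmem hu
            have hwne : w ≠ Sum.inr z₀ := by rintro rfl; exact hz₀nmem hw
            have hmono : ∀ z : X ⊕ Y,
                Sum.elim (· ∈ (E.erase e₀).image Prod.fst)
                  (· ∈ (E.erase e₀).image Prod.snd) z →
                Sum.elim (· ∈ E.image Prod.fst) (· ∈ E.image Prod.snd) z := by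
              rintro (a | b) h
              · exact Finset.image_subset_image (Finset.erase_subset _ _) h
              · exact Finset.image_subset_image (Finset.erase_subset _ _) h
            obtain ⟨p₀⟩ := hconn u w (hmono u hu) (hmono w hw)
            have hnbr : ∀ z, (bipGraph E).Adj (Sum.inr z₀) z → z = Sum.inl e₀.1 := by
              rintro z (⟨p, hp, h1, rfl⟩ | ⟨p, hp, h1, rfl⟩)
              · exact absurd h1 (by simp)
              · have hp2 : p.2 = z₀ := (Sum.inr_injective h1).symm
                rw [huniq p hp hp2]
            have havoid : Sum.inr z₀ ∉ p₀.toPath.val.support :=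
              path_avoid14 hnbr p₀.toPath.property hune hwne
            refine ⟨p₀.toPath.val.transfer (bipGraph (E.erase e₀)) ?_⟩
            intro ε
            induction ε using Sym2.ind with
            | _ a b =>
              intro hε
              have hεE := p₀.toPath.val.edges_subset_edgeSet hε
              rw [SimpleGraph.mem_edgeSet] at hεE ⊢
              rcases hεE with ⟨q, hq, rfl, rfl⟩ | ⟨q, hq, rfl, rfl⟩
              · refine Or.inl ⟨q, Finset.mem_erase.mpr ⟨?_, hq⟩, rfl, rfl⟩
                rintro rfl
                have hm := SimpleGraph.Walk.snd_mem_support_of_mem_edges _ hε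
                rw [he₀mem.2] at hm
                exact havoid hm
              · refine Or.inr ⟨q, Finset.mem_erase.mpr ⟨?_, hq⟩, rfl, rfl⟩
                rintro rfl
                have hm := SimpleGraph.Walk.fst_mem_support_of_mem_edges _ hε
                rw [he₀mem.2] at hm
                exact havoid hm
      · -- leaf on the X side
        obtain ⟨e₀, he₀eq⟩ := Finset.card_eq_one.mp hfib1
        have he₀mem : e₀ ∈ E ∧ e₀.1 = z₀ := by
          have h : e₀ ∈ E.filter fun e => Prod.fst e = z₀ := by
            rw [he₀eq]; exact Finset.mem_singleton_self e₀
          exact Finset.mem_filter.mp h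
        have huniq : ∀ e ∈ E, e.1 = z₀ → e = e₀ := fun e he h2 =>
          Finset.mem_singleton.mp (he₀eq ▸ Finset.mem_filter.mpr ⟨he, h2⟩)
        have hy₀img : e₀.2 ∈ E.image Prod.snd := Finset.mem_image_of_mem _ he₀mem.1
        have hdeg : ∃ e₁ ∈ E, e₁.2 = e₀.2 ∧ e₁ ≠ e₀ := by
          by_contra hcon
          push_neg at hcon
          have hclosed : ∀ a b : X ⊕ Y, (a = Sum.inr e₀.2 ∨ a = Sum.inl z₀) →
              (bipGraph E).Adj a b → (b = Sum.inr e₀.2 ∨ b = Sum.inl z₀) := by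
            rintro a b (rfl | rfl) (⟨p, hp, h1, rfl⟩ | ⟨p, hp, h1, rfl⟩)
            · exact absurd h1 (by simp)
            · have hp2 : p.2 = e₀.2 := (Sum.inr_injective h1).symm
              right; rw [hcon p hp hp2, he₀mem.2]
            · have hp1 : p.1 = z₀ := (Sum.inl_injective h1).symm
              left; rw [huniq p hp hp1]
            · exact absurd h1 (by simp)
          have hall : ∀ e ∈ E, e = e₀ := by
            intro e he
            obtain ⟨p⟩ := hconn (Sum.inr e₀.2) (Sum.inr e.2) hy₀img
              (Finset.mem_image_of_mem _ he)
            rcases reach_closed14 hclosed p (Or.inl rfl) with h | h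
            · exact hcon e he (Sum.inr_injective h)
            · exact absurd h (by simp)
          have hE1 : E = {e₀} := Finset.eq_singleton_iff_unique_mem.mpr ⟨he₀mem.1, hall⟩
          rw [hE1, Finset.card_singleton] at hge
          omega
        obtain ⟨e₁, he₁, he₁snd, he₁ne⟩ := hdeg
        have he₁' : e₁ ∈ E.erase e₀ := Finset.mem_erase.mpr ⟨he₁ne, he₁⟩
        have himgsnd : (E.erase e₀).image Prod.snd = E.image Prod.snd := by
          apply Finset.Subset.antisymm (Finset.image_subset_image (Finset.erase_subset _ _))
          intro b hb
          obtain ⟨e, he, rfl⟩ := Finset.mem_image.mp hb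
          by_cases hcase : e = e₀
          · subst hcase
            exact Finset.mem_image.mpr ⟨e₁, he₁', he₁snd⟩
          · exact Finset.mem_image.mpr ⟨e, Finset.mem_erase.mpr ⟨hcase, he⟩, rfl⟩
        have himgfst : (E.erase e₀).image Prod.fst = (E.image Prod.fst).erase z₀ := by
          ext a
          constructor
          · intro ha
            obtain ⟨e, he, rfl⟩ := Finset.mem_image.mp ha
            obtain ⟨hene, heE⟩ := Finset.mem_erase.mp he
            refine Finset.mem_erase.mpr ⟨?_, Finset.mem_image_of_mem _ heE⟩
            intro haz
            exact hene (huniq e heE haz)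
          · intro ha
            obtain ⟨hane, ha'⟩ := Finset.mem_erase.mp ha
            obtain ⟨e, he, rfl⟩ := Finset.mem_image.mp ha'
            refine Finset.mem_image.mpr ⟨e, Finset.mem_erase.mpr ⟨?_, he⟩, rfl⟩
            rintro rfl
            exact hane he₀mem.2
        have he₀pair : e₀ = (z₀, e₀.2) := Prod.ext he₀mem.2 rfl
        have hEeq : E = insert (z₀, e₀.2) (E.erase e₀) := by
          rw [← he₀pair, Finset.insert_erase he₀mem.1]
        rw [hEeq]
        refine TB14.addX _ _ _ ?_ ?_ ?_
        · rw [himgfst]; exact Finset.notMem_erase _ _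
        · rw [himgsnd]; exact hy₀img
        · have hcard' : (E.erase e₀).card = E.card - 1 := Finset.card_erase_of_mem he₀mem.1
          have hz₀pos : 0 < (E.image Prod.fst).card := Finset.card_pos.mpr ⟨z₀, hz₀img⟩
          refine ih (n - 1) (by omega) _ (by omega) ⟨e₁, he₁'⟩ ?_ ?_
          · rw [himgfst, himgsnd, Finset.card_erase_of_mem hz₀img, hcard']
            omega
          · intro u w hu hw
            have hz₀nmem : z₀ ∉ (E.erase e₀).image Prod.fst := by
              rw [himgfst]; exact Finset.notMem_erase _ _
            have hune : u ≠ Sum.inl z₀ := by rintro rfl; exact hz₀nmem hu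
            have hwne : w ≠ Sum.inl z₀ := by rintro rfl; exact hz₀nmem hw
            have hmono : ∀ z : X ⊕ Y,
                Sum.elim (· ∈ (E.erase e₀).image Prod.fst)
                  (· ∈ (E.erase e₀).image Prod.snd) z →
                Sum.elim (· ∈ E.image Prod.fst) (· ∈ E.image Prod.snd) z := by
              rintro (a | b) h
              · exact Finset.image_subset_image (Finset.erase_subset _ _) h
              · exact Finset.image_subset_image (Finset.erase_subset _ _) h
            obtain ⟨p₀⟩ := hconn u w (hmono u hu) (hmono w hw)
            have hnbr : ∀ z, (bipGraph E).Adj (Sum.inl z₀) z → z = Sum.inr e₀.2 := by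
              rintro z (⟨p, hp, h1, rfl⟩ | ⟨p, hp, h1, rfl⟩)
              · have hp1 : p.1 = z₀ := (Sum.inl_injective h1).symm
                rw [huniq p hp hp1]
              · exact absurd h1 (by simp)
            have havoid : Sum.inl z₀ ∉ p₀.toPath.val.support :=
              path_avoid14 hnbr p₀.toPath.property hune hwne
            refine ⟨p₀.toPath.val.transfer (bipGraph (E.erase e₀)) ?_⟩
            intro ε
            induction ε using Sym2.ind with
            | _ a b =>
              intro hε
              have hεE := p₀.toPath.val.edges_subset_edgeSet hε
              rw [SimpleGraph.mem_edgeSet] at hεE ⊢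
              rcases hεE with ⟨q, hq, rfl, rfl⟩ | ⟨q, hq, rfl, rfl⟩
              · refine Or.inl ⟨q, Finset.mem_erase.mpr ⟨?_, hq⟩, rfl, rfl⟩
                rintro rfl
                have hm := SimpleGraph.Walk.fst_mem_support_of_mem_edges _ hε
                rw [he₀mem.2] at hm
                exact havoid hm
              · refine Or.inr ⟨q, Finset.mem_erase.mpr ⟨?_, hq⟩, rfl, rfl⟩
                rintro rfl
                have hm := SimpleGraph.Walk.snd_mem_support_of_mem_edges _ hε
                rw [he₀mem.2] at hm
                exact havoid hm

end Aux14

/-- Every (finite) tree with at least one edge, viewed as a bipartite graph with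
parts given by its bipartition (`X`, `Y`, edge set `E`, every vertex lying on an
edge), is constructible by conditioning. -/
theorem statement14 (X Y : Type) [Fintype X] [Fintype Y] [DecidableEq X] [DecidableEq Y]
    (E : Finset (X × Y)) (hne : E.Nonempty)
    (hcovX : ∀ x : X, ∃ y, (x, y) ∈ E) (hcovY : ∀ y : Y, ∃ x, (x, y) ∈ E)
    (htree : (bipGraph E).IsTree) :
    ∃ k, ConstructibleBip X Y Set.univ Set.univ (↑E : Set (X × Y)) k := by
  classical
  haveI : Fintype (bipGraph E).edgeSet := (Set.toFinite _).fintype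
  have hX : E.image Prod.fst = Finset.univ := by
    refine Finset.eq_univ_iff_forall.mpr fun x => ?_
    obtain ⟨y, hy⟩ := hcovX x
    exact Finset.mem_image.mpr ⟨(x, y), hy, rfl⟩
  have hY : E.image Prod.snd = Finset.univ := by
    refine Finset.eq_univ_iff_forall.mpr fun y => ?_
    obtain ⟨x, hx⟩ := hcovY y
    exact Finset.mem_image.mpr ⟨(x, y), hx, rfl⟩
  have hcardE : E.card = (bipGraph E).edgeFinset.card := by
    refine Finset.card_bij (fun e _ => s(Sum.inl e.1, Sum.inr e.2)) ?_ ?_ ?_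
    · intro e he
      rw [SimpleGraph.mem_edgeFinset, SimpleGraph.mem_edgeSet]
      exact Or.inl ⟨e, he, rfl, rfl⟩
    · intro a ha b hb hab
      rw [Sym2.eq_iff] at hab
      rcases hab with ⟨h1, h2⟩ | ⟨h1, h2⟩
      · exact Prod.ext (Sum.inl_injective h1) (Sum.inr_injective h2)
      · exact absurd h1 (by simp)
    · intro ε
      induction ε using Sym2.ind with
      | _ u v =>
        intro hε
        rw [SimpleGraph.mem_edgeFinset, SimpleGraph.mem_edgeSet] at hε
        rcases hε with ⟨p, hp, rfl, rfl⟩ | ⟨p, hp, rfl, rfl⟩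
        · exact ⟨p, hp, rfl⟩
        · exact ⟨p, hp, Sym2.eq_swap⟩
  have hcount : E.card + 1 = (E.image Prod.fst).card + (E.image Prod.snd).card := by
    rw [hX, hY, Finset.card_univ, Finset.card_univ]
    have h := htree.card_edgeFinset
    rw [Fintype.card_sum] at h
    rw [hcardE]
    omega
  have htb := build14 E.card E rfl hne hcount
    (fun u w _ _ => htree.isConnected.preconnected u w)
  obtain ⟨k, hcb⟩ := tb14_constructible htb
  refine ⟨k, cb_congr14 hcb ?_ ?_ rfl⟩
  · rw [hX]; exact Finset.coe_univ
  · rw [hY]; exact Finset.coe_univ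
end

section
/- For every k ≥ 1, the set graph 𝔖_k is constructible by conditioning using 2(k−1) doublings. -/
/-- The set graph `𝔖_k`: parts `[k]` and the nonempty subsets of `[k]`, with an edge
`(x, S)` iff `x ∈ S`. -/
def setGraphEdges (k : ℕ) : Finset (Fin k × {S : Finset (Fin k) // S.Nonempty}) :=
  Finset.univ.filter fun p => p.1 ∈ p.2.1

open Sum Set

abbrev NES (k : ℕ) : Type := {S : Finset (Fin k) // S.Nonempty}
abbrev X2T (k : ℕ) := (Fin (k+1) ⊕ Fin (k+1)) ⊕ (Fin (k+1) ⊕ Fin (k+1))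
abbrev Y2T (k : ℕ) := (NES (k+1) ⊕ NES (k+1)) ⊕ (NES (k+1) ⊕ NES (k+1))

lemma mem_setGraphEdges {k : ℕ} (p : Fin k × NES k) :
    p ∈ (↑(setGraphEdges k) : Set (Fin k × NES k)) ↔ p.1 ∈ p.2.1 := by
  simp [setGraphEdges]

def E1' (k : ℕ) : Set ((Fin (k+1) ⊕ Fin (k+1)) × (NES (k+1) ⊕ NES (k+1))) :=
  {e | match e with
    | (inl x, inl S) => x ∈ S.1
    | (inl x, inr S) => x ∈ S.1
    | _ => False}

def E2' (k : ℕ) : Set (X2T k × Y2T k) :=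
  {e | match e with
    | (inl (inl x), inl (inl S)) => x ∈ S.1
    | (inl (inl x), inl (inr S)) => x ∈ S.1
    | (inr (inl x), inl (inl S)) => x = 0 ∧ (0 : Fin (k+1)) ∈ S.1
    | (inl (inl x), inr (inr S)) => x ∈ S.1 ∧ x ≠ 0
    | (inr (inl x), inr (inr S)) => x = 0 ∧ (0 : Fin (k+1)) ∈ S.1
    | _ => False}

def PxS (k : ℕ) : Set (X2T k) :=
  {z | match z with
    | inl (inl _) => True
    | inr (inl x) => x = 0
    | _ => False}

def PyS (k : ℕ) : Set (Y2T k) :=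
  {z | match z with
    | inl (inl S) => (0 : Fin (k+1)) ∈ S.1
    | inl (inr _) => True
    | inr (inr S) => (0 : Fin (k+1)) ∈ S.1
    | inr (inl _) => False}

def fy2 (k : ℕ) : Y2T k → Y2T k := fun z => match z with
  | inl (inl S) => if (0 : Fin (k+1)) ∈ S.1 then inl (inl S) else inl (inr S)
  | inl (inr S) => inl (inr S)
  | inr (inl S) => inl (inr S)
  | inr (inr S) => if (0 : Fin (k+1)) ∈ S.1 then inr (inr S) else inl (inr S)

def phx (k : ℕ) : X2T k → Fin (k+2) := fun z => match z with
  | inl (inl x) => x.castSucc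
  | inl (inr x) => x.castSucc
  | inr _ => Fin.last (k+1)

def addLast (k : ℕ) (S : Finset (Fin (k+1))) : NES (k+2) :=
  ⟨insert (Fin.last (k+1)) (S.image Fin.castSucc), ⟨_, Finset.mem_insert_self _ _⟩⟩

def phy (k : ℕ) : Y2T k → NES (k+2) := fun z => match z with
  | inl (inl S) => addLast k S.1
  | inl (inr S) => ⟨S.1.image Fin.castSucc, S.2.image _⟩
  | inr (inl S) => addLast k S.1
  | inr (inr S) => addLast k (S.1.erase 0)


lemma last_not_mem_image {k : ℕ} (S : Finset (Fin (k+1))) :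
    Fin.last (k+1) ∉ S.image Fin.castSucc := by
  simp only [Finset.mem_image, not_exists]
  exact fun x h => absurd h.2 (Fin.ne_of_lt (Fin.castSucc_lt_last x))

lemma addLast_inj {k : ℕ} {S T : Finset (Fin (k+1))} (h : addLast k S = addLast k T) :
    S = T := by
  have h' := congrArg (fun z => Finset.erase z.1 (Fin.last (k+1))) h
  simp only [addLast, Finset.erase_insert_eq_erase] at h'
  rw [Finset.erase_eq_of_notMem (last_not_mem_image S),
    Finset.erase_eq_of_notMem (last_not_mem_image T)] at h'
  exact Finset.image_injective (Fin.castSucc_injective _) h'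

lemma last_mem_addLast {k : ℕ} (S : Finset (Fin (k+1))) :
    Fin.last (k+1) ∈ (addLast k S).1 := Finset.mem_insert_self _ _

lemma hinjy' (k : ℕ) : Set.InjOn (phy k) (PyS k) := by
  rintro (⟨S|S⟩|⟨S|S⟩) hS (⟨T|T⟩|⟨T|T⟩) hT hST <;>
      simp_all only [PyS, mem_setOf_eq, phy]
  · exact congrArg (fun s => (inl (inl s) : Y2T k)) (Subtype.ext (addLast_inj hST))
  · exact absurd (congrArg (fun z => Fin.last (k+1) ∈ z.1) hST ▸ last_mem_addLast S.1 :
      Fin.last (k+1) ∈ T.1.image Fin.castSucc) (last_not_mem_image T.1)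
  · have := addLast_inj hST
    exact absurd (this ▸ hS) (by simp)
  · exact absurd ((congrArg (fun z => Fin.last (k+1) ∈ z.1) hST).symm ▸ last_mem_addLast T.1)
      (last_not_mem_image S.1)
  · exact congrArg (fun s => (inl (inr s) : Y2T k))
      (Subtype.ext (Finset.image_injective (Fin.castSucc_injective _)
        (Subtype.ext_iff.1 hST)))
  · exact absurd ((congrArg (fun z => Fin.last (k+1) ∈ z.1) hST).symm ▸ last_mem_addLast _)
      (last_not_mem_image S.1)
  · have := addLast_inj hST
    exact absurd (this.symm ▸ hT) (by simp)
  · exact absurd (congrArg (fun z => Fin.last (k+1) ∈ z.1) hST ▸ last_mem_addLast _)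
      (last_not_mem_image T.1)
  · have h' := addLast_inj hST
    have : S.1 = T.1 := by
      rw [← Finset.insert_erase hS, ← Finset.insert_erase hT, h']
    exact congrArg (fun s => (inr (inr s) : Y2T k)) (Subtype.ext this)
lemma hinjx' (k : ℕ) : Set.InjOn (phx k) (PxS k) := by
  rintro (⟨x|x⟩|⟨x|x⟩) hx (⟨y|y⟩|⟨y|y⟩) hy hxy <;>
    simp_all only [PxS, mem_setOf_eq, phx] <;> first
    | rfl
    | (exact absurd hxy (Fin.ne_of_lt (Fin.castSucc_lt_last _)))
    | (exact absurd hxy.symm (Fin.ne_of_lt (Fin.castSucc_lt_last _)))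
    | (exact hx.elim)
    | (exact hy.elim)
    | (rw [Fin.castSucc_inj] at hxy; rw [hxy])


noncomputable def pre (k : ℕ) (T : Finset (Fin (k+2))) : Finset (Fin (k+1)) :=
  T.preimage Fin.castSucc ((Fin.castSucc_injective _).injOn)

lemma mem_pre {k : ℕ} {T : Finset (Fin (k+2))} {x : Fin (k+1)} :
    x ∈ pre k T ↔ x.castSucc ∈ T := Finset.mem_preimage

lemma addLast_pre {k : ℕ} {T : Finset (Fin (k+2))} (h : Fin.last (k+1) ∈ T) :
    (addLast k (pre k T)).1 = T := by
  ext u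
  induction u using Fin.lastCases with
  | last => simpa [addLast] using h
  | cast x =>
    simp only [addLast, Finset.mem_insert, Finset.mem_image]
    constructor
    · rintro (hx | ⟨y, hy, hyx⟩)
      · exact absurd hx (Fin.ne_of_lt (Fin.castSucc_lt_last _))
      · exact (Fin.castSucc_injective _ hyx) ▸ mem_pre.1 hy
    · intro hu
      exact Or.inr ⟨x, mem_pre.2 hu, rfl⟩

lemma e5' (k : ℕ) : phx k '' PxS k = univ := by
  ext u
  simp only [mem_univ, iff_true, mem_image]
  induction u using Fin.lastCases with
  | last => exact ⟨inr (inl 0), rfl, rfl⟩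
  | cast x => exact ⟨inl (inl x), trivial, rfl⟩

lemma image_pre {k : ℕ} {T : Finset (Fin (k+2))} (hl : Fin.last (k+1) ∉ T) :
    (pre k T).image Fin.castSucc = T := by
  ext u
  induction u using Fin.lastCases with
  | last => exact iff_of_false (last_not_mem_image _) hl
  | cast x =>
    simp only [Finset.mem_image]
    constructor
    · rintro ⟨y, hy, hyx⟩
      exact (Fin.castSucc_injective _ hyx) ▸ mem_pre.1 hy
    · intro hu
      exact ⟨x, mem_pre.2 hu, rfl⟩

lemma e6' (k : ℕ) : phy k '' PyS k = univ := by
  ext T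
  simp only [mem_univ, iff_true, mem_image]
  by_cases hl : Fin.last (k+1) ∈ T.1
  · by_cases h0 : (0 : Fin (k+1)).castSucc ∈ T.1
    · exact ⟨inl (inl ⟨pre k T.1, ⟨0, mem_pre.2 h0⟩⟩), mem_pre.2 h0,
        Subtype.ext (addLast_pre hl)⟩
    · refine ⟨inr (inr ⟨insert 0 (pre k T.1), Finset.insert_nonempty _ _⟩),
        Finset.mem_insert_self _ _, Subtype.ext ?_⟩
      show (addLast k ((insert 0 (pre k T.1)).erase 0)).1 = T.1
      rw [Finset.erase_insert (fun h => h0 (mem_pre.1 h))]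
      exact addLast_pre hl
  · have hne : (pre k T.1).Nonempty := by
      obtain ⟨u, hu⟩ := T.2
      obtain ⟨x, rfl⟩ := Fin.exists_castSucc_eq.2 (fun h => hl (h ▸ hu))
      exact ⟨x, mem_pre.2 hu⟩
    refine ⟨inl (inr ⟨pre k T.1, hne⟩), trivial, Subtype.ext ?_⟩
    exact image_pre hl

lemma e7' (k : ℕ) : { e' | ∃ e ∈ {e ∈ E2' k | e.1 ∈ PxS k ∧ e.2 ∈ PyS k},
      e' = (phx k e.1, phy k e.2) } =
      (↑(setGraphEdges (k+2)) : Set (Fin (k+2) × NES (k+2))) := by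
  ext p
  rw [mem_setGraphEdges]
  constructor
  · rintro ⟨⟨a, b⟩, ⟨he, -, hpy⟩, rfl⟩
    rcases a with x | x <;> rcases b with S | S <;>
      rcases x with x | x <;> rcases S with S | S <;>
      first
      | exact he.elim
      | skip
    · exact Finset.mem_insert_of_mem (Finset.mem_image_of_mem _ he)
    · exact Finset.mem_image_of_mem _ he
    · exact Finset.mem_insert_of_mem
        (Finset.mem_image_of_mem _ (Finset.mem_erase.2 ⟨he.2, he.1⟩))
    · exact Finset.mem_insert_self _ _
    · exact Finset.mem_insert_self _ _
  · obtain ⟨u, T⟩ := p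
    intro hp
    induction u using Fin.lastCases with
    | last =>
      by_cases h0 : (0 : Fin (k+1)).castSucc ∈ T.1
      · exact ⟨(inr (inl 0), inl (inl ⟨pre k T.1, ⟨0, mem_pre.2 h0⟩⟩)),
          ⟨⟨rfl, mem_pre.2 h0⟩, rfl, mem_pre.2 h0⟩,
          Prod.ext rfl (Subtype.ext (addLast_pre hp)).symm⟩
      · refine ⟨(inr (inl 0), inr (inr ⟨insert 0 (pre k T.1), Finset.insert_nonempty _ _⟩)),
          ⟨⟨rfl, Finset.mem_insert_self _ _⟩, rfl, Finset.mem_insert_self _ _⟩,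
          Prod.ext rfl (Subtype.ext ?_).symm⟩
        show (addLast k ((insert 0 (pre k T.1)).erase 0)).1 = T.1
        rw [Finset.erase_insert (fun h => h0 (mem_pre.1 h))]
        exact addLast_pre hp
    | cast x =>
      by_cases hl : Fin.last (k+1) ∈ T.1
      · by_cases h0 : (0 : Fin (k+1)).castSucc ∈ T.1
        · exact ⟨(inl (inl x), inl (inl ⟨pre k T.1, ⟨0, mem_pre.2 h0⟩⟩)),
            ⟨mem_pre.2 hp, trivial, mem_pre.2 h0⟩,
            Prod.ext rfl (Subtype.ext (addLast_pre hl)).symm⟩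
        · refine ⟨(inl (inl x), inr (inr ⟨insert 0 (pre k T.1), Finset.insert_nonempty _ _⟩)),
            ⟨⟨Finset.mem_insert_of_mem (mem_pre.2 hp), fun hx => h0 (hx ▸ hp)⟩,
              trivial, Finset.mem_insert_self _ _⟩,
            Prod.ext rfl (Subtype.ext ?_).symm⟩
          show (addLast k ((insert 0 (pre k T.1)).erase 0)).1 = T.1
          rw [Finset.erase_insert (fun h => h0 (mem_pre.1 h))]
          exact addLast_pre hl
      · exact ⟨(inl (inl x), inl (inr ⟨pre k T.1, ⟨x, mem_pre.2 hp⟩⟩)),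
          ⟨mem_pre.2 hp, trivial, trivial⟩,
          Prod.ext rfl (Subtype.ext (image_pre hl)).symm⟩

lemma eE1 (k : ℕ) : ({ e' | ∃ e ∈ (↑(setGraphEdges (k+1)) : Set (Fin (k+1) × NES (k+1))),
        e' = (Sum.inl e.1, Sum.inl e.2) } ∪
      { e' | ∃ e ∈ (↑(setGraphEdges (k+1)) : Set (Fin (k+1) × NES (k+1))),
        (e.1 ∈ (∅ : Set (Fin (k+1))) ∨ e.2 ∈ (univ : Set (NES (k+1)))) ∧
        ((e.1 ∈ (∅ : Set (Fin (k+1))) ∧ e'.1 = Sum.inr e.1) ∨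
          (e.1 ∉ (∅ : Set (Fin (k+1))) ∧ e'.1 = Sum.inl e.1)) ∧
        ((e.2 ∈ (univ : Set (NES (k+1))) ∧ e'.2 = Sum.inr e.2) ∨
          (e.2 ∉ (univ : Set (NES (k+1))) ∧ e'.2 = Sum.inl e.2)) }) = E1' k := by
  ext p
  constructor
  · rintro (⟨⟨x, S⟩, he, rfl⟩ | ⟨⟨x, S⟩, he, -, h1, h2⟩)
    · exact (mem_setGraphEdges _).1 he
    · rcases h1 with ⟨h, -⟩ | ⟨-, h1⟩
      · exact absurd h (by simp)
      · rcases h2 with ⟨-, h2⟩ | ⟨hn, -⟩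
        · obtain ⟨a, b⟩ := p
          cases h1; cases h2
          exact (mem_setGraphEdges _).1 he
        · exact absurd (mem_univ _) hn
  · obtain ⟨x | x, S | S⟩ := p <;> intro hab
    · exact Or.inl ⟨(x, S), (mem_setGraphEdges _).2 hab, rfl⟩
    · exact Or.inr ⟨(x, S), (mem_setGraphEdges _).2 hab, Or.inr (mem_univ _),
        Or.inr ⟨by simp, rfl⟩, Or.inl ⟨mem_univ _, rfl⟩⟩
    · exact hab.elim
    · exact hab.elim

lemma eE2 (k : ℕ) : ({ e' | ∃ e ∈ E1' k, e' = (Sum.inl e.1, Sum.inl e.2) } ∪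
      { e' | ∃ e ∈ E1' k, (e.1 ∈ ({Sum.inl 0} : Set (Fin (k+1) ⊕ Fin (k+1))) ∨
          e.2 ∈ Sum.inr '' univ) ∧
        ((e.1 ∈ ({Sum.inl 0} : Set (Fin (k+1) ⊕ Fin (k+1))) ∧ e'.1 = Sum.inr e.1) ∨
          (e.1 ∉ ({Sum.inl 0} : Set (Fin (k+1) ⊕ Fin (k+1))) ∧ e'.1 = Sum.inl e.1)) ∧
        ((e.2 ∈ Sum.inr '' (univ : Set (NES (k+1))) ∧ e'.2 = Sum.inr e.2) ∨
          (e.2 ∉ Sum.inr '' (univ : Set (NES (k+1))) ∧ e'.2 = Sum.inl e.2)) }) =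
      E2' k := by
  ext p
  constructor
  · rintro (⟨⟨a, b⟩, he, rfl⟩ | ⟨⟨a, b⟩, he, hcond, h1, h2⟩)
    · rcases a with x | x <;> rcases b with S | S
      · exact he
      · exact he
      · exact he.elim
      · exact he.elim
    · rcases a with x | x <;> rcases b with S | S
      · rcases h2 with ⟨⟨S', -, hS'⟩, -⟩ | ⟨-, h2⟩
        · exact absurd hS' (by simp)
        · rcases h1 with ⟨ha, h1⟩ | ⟨hna, -⟩
          · have hx : x = 0 := by simpa using ha
            obtain ⟨u, v⟩ := p
            cases h1; cases h2
            exact ⟨hx, hx ▸ he⟩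
          · rcases hcond with hc | ⟨S', -, hS'⟩
            · exact absurd hc hna
            · exact absurd hS' (by simp)
      · rcases h2 with ⟨-, h2⟩ | ⟨hn, -⟩
        · rcases h1 with ⟨ha, h1⟩ | ⟨hna, h1⟩
          · have hx : x = 0 := by simpa using ha
            obtain ⟨u, v⟩ := p
            cases h1; cases h2
            exact ⟨hx, hx ▸ he⟩
          · have hx : x ≠ 0 := by simpa using hna
            obtain ⟨u, v⟩ := p
            cases h1; cases h2
            exact ⟨he, hx⟩
        · exact absurd ⟨S, trivial, rfl⟩ hn
      · exact he.elim
      · exact he.elim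
  · obtain ⟨a, b⟩ := p
    rcases a with x | x <;> rcases b with S | S <;>
      rcases x with x | x <;> rcases S with S | S <;> intro hp
    · exact Or.inl ⟨(inl x, inl S), hp, rfl⟩
    · exact Or.inl ⟨(inl x, inr S), hp, rfl⟩
    · exact hp.elim
    · exact hp.elim
    · exact hp.elim
    · exact Or.inr ⟨(inl x, inr S), hp.1, Or.inr ⟨S, trivial, rfl⟩,
        Or.inr ⟨by simp [hp.2], rfl⟩, Or.inl ⟨⟨S, trivial, rfl⟩, rfl⟩⟩
    · exact hp.elim
    · exact hp.elim
    · obtain ⟨rfl, hS⟩ := hp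
      exact Or.inr ⟨(inl 0, inl S), hS, Or.inl rfl,
        Or.inl ⟨rfl, rfl⟩, Or.inr ⟨by simp, rfl⟩⟩
    · exact hp.elim
    · exact hp.elim
    · exact hp.elim
    · exact hp.elim
    · obtain ⟨rfl, hS⟩ := hp
      exact Or.inr ⟨(inl 0, inr S), hS, Or.inl rfl,
        Or.inl ⟨rfl, rfl⟩, Or.inl ⟨⟨S, trivial, rfl⟩, rfl⟩⟩
    · exact hp.elim
    · exact hp.elim

lemma hhomL (k : ℕ) : ∀ e ∈ E2' k, ((id e.1 : X2T k), fy2 k e.2) ∈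
      { e ∈ E2' k | e.1 ∈ PxS k ∧ e.2 ∈ PyS k } := by
  rintro ⟨a, b⟩ he
  rcases a with x | x <;> rcases b with S | S <;>
    rcases x with x | x <;> rcases S with S | S
  · by_cases h0 : (0 : Fin (k+1)) ∈ S.1
    · refine ⟨?_, trivial, ?_⟩ <;> simp only [id, fy2, if_pos h0]
      · exact he
      · exact h0
    · refine ⟨?_, trivial, ?_⟩ <;> simp only [id, fy2, if_neg h0]
      · exact he
      · trivial
  · exact ⟨he, trivial, trivial⟩
  · exact he.elim
  · exact he.elim
  · exact he.elim
  · by_cases h0 : (0 : Fin (k+1)) ∈ S.1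
    · refine ⟨?_, trivial, ?_⟩ <;> simp only [id, fy2, if_pos h0]
      · exact he
      · exact h0
    · refine ⟨?_, trivial, ?_⟩ <;> simp only [id, fy2, if_neg h0]
      · exact he.1
      · trivial
  · exact he.elim
  · exact he.elim
  · refine ⟨?_, he.1, ?_⟩ <;> simp only [fy2, if_pos he.2]
    · exact he
    · exact he.2
  · exact he.elim
  · exact he.elim
  · exact he.elim
  · exact he.elim
  · refine ⟨?_, he.1, ?_⟩ <;> simp only [fy2, if_pos he.2]
    · exact he
    · exact he.2
  · exact he.elim
  · exact he.elim


lemma stepL (k m : ℕ)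
    (h : ConstructibleBip (Fin (k+1)) (NES (k+1)) Set.univ Set.univ
      (↑(setGraphEdges (k+1))) m) :
    ConstructibleBip (Fin (k+2)) (NES (k+2)) Set.univ Set.univ
      (↑(setGraphEdges (k+2))) (m + 2) := by
  have h1 := ConstructibleBip.double _ _ _ _ _ ∅ Set.univ m (empty_subset _)
    (subset_refl _) h
  rw [eE1 k] at h1
  rw [show (Sum.inl '' (univ : Set (Fin (k+1))) ∪ Sum.inr '' ∅ :
        Set (Fin (k+1) ⊕ Fin (k+1))) = Sum.inl '' univ by simp] at h1
  rw [show (Sum.inl '' (univ : Set (NES (k+1))) ∪ Sum.inr '' univ :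
        Set (NES (k+1) ⊕ NES (k+1))) = univ by
      ext z; rcases z with S | S <;> simp] at h1
  have h2 := ConstructibleBip.double _ _ _ _ _ {Sum.inl 0} (Sum.inr '' univ) (m+1)
    (by simp) (subset_univ _) h1
  rw [eE2 k] at h2
  have hpx : PxS k ⊆ Sum.inl '' (Sum.inl '' (univ : Set (Fin (k+1)))) ∪
      Sum.inr '' {Sum.inl 0} := by
    rintro (⟨x|x⟩|⟨x|x⟩) hz
    · exact Or.inl ⟨inl x, ⟨x, trivial, rfl⟩, rfl⟩
    · exact hz.elim
    · exact Or.inr ⟨inl x, by simpa [PxS] using hz, rfl⟩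
    · exact hz.elim
  have hpy : PyS k ⊆ Sum.inl '' (univ : Set (NES (k+1) ⊕ NES (k+1))) ∪
      Sum.inr '' (Sum.inr '' univ) := by
    rintro (⟨S|S⟩|⟨S|S⟩) hz
    · exact Or.inl ⟨inl S, trivial, rfl⟩
    · exact Or.inl ⟨inr S, trivial, rfl⟩
    · exact hz.elim
    · exact Or.inr ⟨inr S, ⟨S, trivial, rfl⟩, rfl⟩
  have hfixy : ∀ v ∈ PyS k, fy2 k v = v := by
    rintro (⟨S|S⟩|⟨S|S⟩) hv
    · exact if_pos hv
    · rfl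
    · exact hv.elim
    · exact if_pos hv
  have h3 := ConstructibleBip.collapse _ _ _ (PxS k) _ (PyS k) (E2' k) (m+2)
    id (fy2 k) hpx hpy (hhomL k) (fun v _ => rfl) hfixy h2
  have h4 := ConstructibleBip.iso _ _ (Fin (k+2)) (NES (k+2)) _ _ _ (m+2)
    (phx k) (phy k) (hinjx' k) (hinjy' k) h3
  rw [e5' k, e6' k, e7' k] at h4
  exact h4

lemma baseL : ConstructibleBip (Fin 1) (NES 1) Set.univ Set.univ
    (↑(setGraphEdges 1)) 0 := by
  have hy : ((0 : Fin 1) : Fin 1) ∈ ({0} : Finset (Fin 1)) := by simp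
  set y : NES 1 := ⟨{0}, ⟨0, hy⟩⟩ with hydef
  have hx : (Set.univ : Set (Fin 1)) = {0} := by
    ext a; simp [Subsingleton.elim a 0]
  have hyu : (Set.univ : Set (NES 1)) = {y} := by
    ext S
    simp only [mem_univ, true_iff, mem_singleton_iff]
    refine Subtype.ext ?_
    ext a
    obtain ⟨b, hb⟩ := S.2
    rw [Subsingleton.elim a (0 : Fin 1), Subsingleton.elim b (0 : Fin 1)] at *
    simp only [hydef, Finset.mem_singleton, iff_true]
    exact hb
  have he : (↑(setGraphEdges 1) : Set (Fin 1 × NES 1)) = {((0 : Fin 1), y)} := by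
    ext ⟨a, b⟩
    rw [mem_setGraphEdges]
    constructor
    · intro hab
      have : b = y := by rw [← mem_singleton_iff, ← hyu]; trivial
      rw [mem_singleton_iff, Subsingleton.elim a (0 : Fin 1), this]
    · intro hab
      rw [mem_singleton_iff] at hab
      cases hab
      exact hy
  rw [hx, hyu, he]
  exact ConstructibleBip.single _ _ _ _

lemma allL (n : ℕ) : ConstructibleBip (Fin (n+1)) (NES (n+1)) Set.univ Set.univ
    (↑(setGraphEdges (n+1))) (2*n) := by
  induction n with
  | zero => exact baseL
  | succ n ih =>
    have := stepL n (2*n) ih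
    rw [show 2*n+2 = 2*(n+1) by ring] at this
    exact this


/-- For every `k ≥ 1`, the set graph `𝔖_k` is constructible by conditioning using
`2(k-1)` doublings. -/
theorem statement15 (k : ℕ) (hk : 1 ≤ k) :
    ConstructibleBip (Fin k) {S : Finset (Fin k) // S.Nonempty} Set.univ Set.univ
      (↑(setGraphEdges k) : Set (Fin k × {S : Finset (Fin k) // S.Nonempty}))
      (2 * (k - 1)) := by
  obtain ⟨n, rfl⟩ : ∃ n, k = n + 1 := ⟨k - 1, (Nat.succ_pred_eq_of_pos hk).symm⟩
  simpa using allL n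
end

section
/- The cycle with shortcuts 𝔠_12 — the graph on vertex set {0,…,11} with an edge {u,v} iff |u−v| ∈ {1,3,9,11}, viewed as a bipartite graph with parts the even and the odd vertices — is not constructible by conditioning. -/
/-- The edge set of the cycle with shortcuts `𝔠_12`: vertices `{0,…,11}`, with an edge
between `u` and `v` iff `|u - v| ∈ {1, 3, 9, 11}`, viewed as a bipartite graph whose
parts are the even and the odd vertices. -/
def shortcutEdges :
    Finset ({u : Fin 12 // u.val % 2 = 0} × {u : Fin 12 // u.val % 2 = 1}) :=
  Finset.univ.filter fun p =>
    (max p.1.1.val p.2.1.val - min p.1.1.val p.2.1.val) ∈ ({1, 3, 9, 11} : Finset ℕ)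

namespace C12proof

open Classical

def e12 (a b : Fin 6) : Prop :=
  (b.val + 6 - a.val) % 6 = 0 ∨ (b.val + 6 - a.val) % 6 = 1 ∨
  (b.val + 6 - a.val) % 6 = 4 ∨ (b.val + 6 - a.val) % 6 = 5

instance (a b : Fin 6) : Decidable (e12 a b) := by unfold e12; infer_instance

lemma e12_refl : ∀ a : Fin 6, e12 a a := by decide

lemma rows_distinct : ∀ a a' : Fin 6, (∀ b, e12 a b ↔ e12 a' b) → a = a' := by decide

lemma cols_distinct : ∀ b b' : Fin 6, (∀ a, e12 a b ↔ e12 a b') → b = b' := by decide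

lemma window4 : ∀ a a' b b' : Fin 6, a ≠ a' → b ≠ b' →
    ¬ e12 a b → ¬ e12 a b' → ¬ e12 a' b → ¬ e12 a' b' → False := by decide

lemma stage1X : ∀ r b v : Fin 6, (∀ a, a ≠ r → e12 a b → e12 a v) →
    (v = b ∨ (b = r+1 ∧ v = b+1) ∨ (b = r+4 ∧ v = b+5)) := by decide

lemma stage2X : ∀ r s v1 v2 : Fin 6, (v1 = r+1 ∨ v1 = r+2) → (v2 = r+4 ∨ v2 = r+3) →
    (∀ b, e12 r b → e12 s (if b = r+1 then v1 else if b = r+4 then v2 else b)) →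
    s = r ∧ v1 = r+1 ∧ v2 = r+4 := by decide

lemma stage1Y : ∀ r a v : Fin 6, (∀ b, b ≠ r → e12 a b → e12 v b) →
    (v = a ∨ (a = r+2 ∧ v = a+1) ∨ (a = r+5 ∧ v = a+5)) := by decide

lemma stage2Y : ∀ r s v1 v2 : Fin 6, (v1 = r+2 ∨ v1 = r+3) → (v2 = r+5 ∨ v2 = r+4) →
    (∀ a, e12 a r → e12 (if a = r+2 then v1 else if a = r+5 then v2 else a) s) →
    s = r ∧ v1 = r+2 ∧ v2 = r+5 := by decide

lemma fin6_add14 : ∀ r : Fin 6, r + 1 ≠ r + 4 := by decide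
lemma fin6_add25 : ∀ r : Fin 6, r + 2 ≠ r + 5 := by decide
lemma fin6_b15 : ∀ r : Fin 6, (r+1) + 1 = r + 2 := by decide
lemma fin6_b45 : ∀ r : Fin 6, (r+4) + 5 = r + 3 := by decide
lemma fin6_c23 : ∀ r : Fin 6, (r+2) + 1 = r + 3 := by decide
lemma fin6_c55 : ∀ r : Fin 6, (r+5) + 5 = r + 4 := by decide

/-- Rigidity: an endomorphism of `𝔠₁₂` that fixes all rows except possibly `r`
is the identity. -/
lemma rigX (r : Fin 6) (ma mb : Fin 6 → Fin 6)
    (hma : ∀ a, a ≠ r → ma a = a)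
    (h : ∀ a b, e12 a b → e12 (ma a) (mb b)) :
    (∀ a, ma a = a) ∧ (∀ b, mb b = b) := by
  have hP : ∀ b a, a ≠ r → e12 a b → e12 a (mb b) := by
    intro b a har hab
    have := h a b hab
    rwa [hma a har] at this
  have h1 : ∀ b, mb b = b ∨ (b = r+1 ∧ mb b = b+1) ∨ (b = r+4 ∧ mb b = b+5) :=
    fun b => stage1X r b (mb b) (hP b)
  have hv1 : mb (r+1) = r+1 ∨ mb (r+1) = r+2 := by
    rcases h1 (r+1) with h' | ⟨_, h'⟩ | ⟨h', _⟩
    · exact Or.inl h'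
    · rw [fin6_b15] at h'; exact Or.inr h'
    · exact absurd h' (fin6_add14 r)
  have hv2 : mb (r+4) = r+4 ∨ mb (r+4) = r+3 := by
    rcases h1 (r+4) with h' | ⟨h', _⟩ | ⟨_, h'⟩
    · exact Or.inl h'
    · exact absurd h'.symm (fin6_add14 r)
    · rw [fin6_b45] at h'; exact Or.inr h'
  have hfunc : ∀ b, e12 r b →
      e12 (ma r) (if b = r+1 then mb (r+1) else if b = r+4 then mb (r+4) else b) := by
    intro b hb
    have hh := h r b hb
    by_cases hb1 : b = r+1
    · subst hb1; simpa using hh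
    · by_cases hb4 : b = r+4
      · subst hb4; simp only [if_neg hb1, if_pos rfl]; exact hh
      · simp only [if_neg hb1, if_neg hb4]
        rcases h1 b with h' | ⟨h', _⟩ | ⟨h', _⟩
        · rwa [h'] at hh
        · exact absurd h' hb1
        · exact absurd h' hb4
  obtain ⟨hs, hc1, hc2⟩ := stage2X r (ma r) (mb (r+1)) (mb (r+4)) hv1 hv2 hfunc
  constructor
  · intro a
    by_cases ha : a = r
    · subst ha; exact hs
    · exact hma a ha
  · intro b
    rcases h1 b with h' | ⟨hb, _⟩ | ⟨hb, _⟩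
    · exact h'
    · subst hb; exact hc1
    · subst hb; exact hc2

lemma rigY (r : Fin 6) (ma mb : Fin 6 → Fin 6)
    (hmb : ∀ b, b ≠ r → mb b = b)
    (h : ∀ a b, e12 a b → e12 (ma a) (mb b)) :
    (∀ a, ma a = a) ∧ (∀ b, mb b = b) := by
  have hP : ∀ a b, b ≠ r → e12 a b → e12 (ma a) b := by
    intro a b hbr hab
    have := h a b hab
    rwa [hmb b hbr] at this
  have h1 : ∀ a, ma a = a ∨ (a = r+2 ∧ ma a = a+1) ∨ (a = r+5 ∧ ma a = a+5) :=
    fun a => stage1Y r a (ma a) (hP a)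
  have hv1 : ma (r+2) = r+2 ∨ ma (r+2) = r+3 := by
    rcases h1 (r+2) with h' | ⟨_, h'⟩ | ⟨h', _⟩
    · exact Or.inl h'
    · rw [fin6_c23] at h'; exact Or.inr h'
    · exact absurd h' (fin6_add25 r)
  have hv2 : ma (r+5) = r+5 ∨ ma (r+5) = r+4 := by
    rcases h1 (r+5) with h' | ⟨h', _⟩ | ⟨_, h'⟩
    · exact Or.inl h'
    · exact absurd h'.symm (fin6_add25 r)
    · rw [fin6_c55] at h'; exact Or.inr h'
  have hfunc : ∀ a, e12 a r →
      e12 (if a = r+2 then ma (r+2) else if a = r+5 then ma (r+5) else a) (mb r) := by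
    intro a ha
    have hh := h a r ha
    by_cases ha2 : a = r+2
    · subst ha2; simpa using hh
    · by_cases ha5 : a = r+5
      · subst ha5; simp only [if_neg ha2, if_pos rfl]; exact hh
      · simp only [if_neg ha2, if_neg ha5]
        rcases h1 a with h' | ⟨h', _⟩ | ⟨h', _⟩
        · rwa [h'] at hh
        · exact absurd h' ha2
        · exact absurd h' ha5
  obtain ⟨hs, hc1, hc2⟩ := stage2Y r (mb r) (ma (r+2)) (ma (r+5)) hv1 hv2 hfunc
  constructor
  · intro a
    rcases h1 a with h' | ⟨ha, _⟩ | ⟨ha, _⟩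
    · exact h'
    · subst ha; exact hc1
    · subst ha; exact hc2
  · intro b
    by_cases hb : b = r
    · subst hb; exact hs
    · exact hmb b hb

/-- A realization of `𝔠₁₂` inside the bipartite graph `(vx, vy, E)`:
an induced copy of the pattern together with a retraction onto it. -/
def Realizes (X Y : Type) (vx : Set X) (vy : Set Y) (E : Set (X × Y)) : Prop :=
  ∃ A : Fin 6 → X, ∃ B : Fin 6 → Y, ∃ fx : X → X, ∃ fy : Y → Y,
    (∀ a, A a ∈ vx) ∧ (∀ b, B b ∈ vy) ∧
    (∀ a b, ((A a, B b) ∈ E ↔ e12 a b)) ∧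
    (∀ e ∈ E, (fx e.1, fy e.2) ∈ E ∧ (∃ a, fx e.1 = A a) ∧ (∃ b, fy e.2 = B b)) ∧
    (∀ a, fx (A a) = A a) ∧ (∀ b, fy (B b) = B b)

lemma edges_sub {X Y : Type} {vx : Set X} {vy : Set Y} {E : Set (X × Y)} {k : ℕ}
    (h : ConstructibleBip X Y vx vy E k) : ∀ e ∈ E, e.1 ∈ vx ∧ e.2 ∈ vy := by
  induction h with
  | single X Y x y =>
      intro e he
      rw [Set.mem_singleton_iff] at he
      subst he
      exact ⟨rfl, rfl⟩
  | double X Y vx vy E ox oy k hox hoy h ih =>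
      rintro e (⟨e₀, he₀, rfl⟩ | ⟨e₀, he₀, hor, h1, h2⟩)
      · exact ⟨Or.inl ⟨e₀.1, (ih e₀ he₀).1, rfl⟩, Or.inl ⟨e₀.2, (ih e₀ he₀).2, rfl⟩⟩
      · constructor
        · rcases h1 with ⟨hm, he⟩ | ⟨hm, he⟩
          · rw [he]; exact Or.inr ⟨e₀.1, hm, rfl⟩
          · rw [he]; exact Or.inl ⟨e₀.1, (ih e₀ he₀).1, rfl⟩
        · rcases h2 with ⟨hm, he⟩ | ⟨hm, he⟩
          · rw [he]; exact Or.inr ⟨e₀.2, hm, rfl⟩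
          · rw [he]; exact Or.inl ⟨e₀.2, (ih e₀ he₀).2, rfl⟩
  | collapse X Y vx px vy py E k fx fy hpx hpy hhom hfixx hfixy h ih =>
      rintro e ⟨_, h1, h2⟩
      exact ⟨h1, h2⟩
  | iso X Y X' Y' vx vy E k φx φy hinjx hinjy h ih =>
      rintro e ⟨e₀, he₀, rfl⟩
      exact ⟨⟨e₀.1, (ih e₀ he₀).1, rfl⟩, ⟨e₀.2, (ih e₀ he₀).2, rfl⟩⟩

theorem no_real {X Y : Type} {vx : Set X} {vy : Set Y} {E : Set (X × Y)} {k : ℕ}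
    (h : ConstructibleBip X Y vx vy E k) : ¬ Realizes X Y vx vy E := by
  induction h with
  | single X Y x y =>
      rintro ⟨A, B, fx, fy, hA, hB, hpat, hret, hfa, hfb⟩
      have h0 : A 0 = x := hA 0
      have h1 : A 1 = x := hA 1
      have : (0 : Fin 6) = 1 := by
        apply rows_distinct
        intro b
        rw [← hpat 0 b, ← hpat 1 b, h0, h1]
      exact absurd this (by decide)
  | collapse X Y vx px vy py E k fx fy hpx hpy hhom hfixx hfixy h ih =>
      rintro ⟨A, B, gx, gy, hA, hB, hpat, hret, hfa, hfb⟩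
      apply ih
      refine ⟨A, B, gx ∘ fx, gy ∘ fy, fun a => hpx (hA a), fun b => hpy (hB b), ?_, ?_, ?_, ?_⟩
      · intro a b
        rw [← hpat a b]
        constructor
        · intro he
          exact ⟨he, hA a, hB b⟩
        · rintro ⟨he, _, _⟩
          exact he
      · intro e he
        have h1 := hhom e he
        have h2 := hret _ h1
        refine ⟨h2.1.1, h2.2.1, h2.2.2⟩
      · intro a
        have h1 : fx (A a) = A a := hfixx _ (hA a)
        simp only [Function.comp_apply, h1, hfa a]
      · intro b
        have h1 : fy (B b) = B b := hfixy _ (hB b)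
        simp only [Function.comp_apply, h1, hfb b]
  | iso X Y X' Y' vx vy E k φx φy hinjx hinjy h ih =>
      rintro ⟨A, B, gx, gy, hA, hB, hpat, hret, hfa, hfb⟩
      apply ih
      have hsub := edges_sub h
      -- choose preimages
      have hwa : ∀ a, ∃ w ∈ vx, φx w = A a := by
        intro a
        rcases hA a with ⟨w, hw, hww⟩
        exact ⟨w, hw, hww⟩
      have hyb : ∀ b, ∃ y ∈ vy, φy y = B b := by
        intro b
        rcases hB b with ⟨y, hy, hyy⟩
        exact ⟨y, hy, hyy⟩
      set wa : Fin 6 → X := fun a => (hwa a).choose with hwadef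
      set yb : Fin 6 → Y := fun b => (hyb b).choose with hybdef
      have hwa1 : ∀ a, wa a ∈ vx := fun a => (hwa a).choose_spec.1
      have hwa2 : ∀ a, φx (wa a) = A a := fun a => (hwa a).choose_spec.2
      have hyb1 : ∀ b, yb b ∈ vy := fun b => (hyb b).choose_spec.1
      have hyb2 : ∀ b, φy (yb b) = B b := fun b => (hyb b).choose_spec.2
      -- retraction maps
      set Fx : X → X := fun x =>
        if h : ∃ w ∈ vx, φx w = gx (φx x) then h.choose else x with hFxdef
      set Fy : Y → Y := fun y =>
        if h : ∃ y' ∈ vy, φy y' = gy (φy y) then h.choose else y with hFydef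
      refine ⟨wa, yb, Fx, Fy, hwa1, hyb1, ?_, ?_, ?_, ?_⟩
      · intro a b
        constructor
        · intro he
          have : (φx (wa a), φy (yb b)) ∈ {e' | ∃ e ∈ E, e' = (φx e.1, φy e.2)} :=
            ⟨(wa a, yb b), he, rfl⟩
          rw [hwa2, hyb2] at this
          exact (hpat a b).mp this
        · intro he
          have h1 := (hpat a b).mpr he
          rcases h1 with ⟨e₀, he₀, heq⟩
          have h2 := hsub e₀ he₀
          have hx : e₀.1 = wa a := by
            apply hinjx h2.1 (hwa1 a)
            rw [hwa2 a]
            exact (congrArg Prod.fst heq).symm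
          have hy : e₀.2 = yb b := by
            apply hinjy h2.2 (hyb1 b)
            rw [hyb2 b]
            exact (congrArg Prod.snd heq).symm
          rw [← hx, ← hy]
          exact he₀
      · intro e he
        have he' : (φx e.1, φy e.2) ∈ {e' | ∃ e ∈ E, e' = (φx e.1, φy e.2)} := ⟨e, he, rfl⟩
        obtain ⟨h1, ⟨a, ha⟩, ⟨b, hb⟩⟩ := hret _ he'
        rcases h1 with ⟨e₀, he₀, heq⟩
        have h2 := hsub e₀ he₀
        have hgx : gx (φx e.1) = φx e₀.1 := (congrArg Prod.fst heq)
        have hgy : gy (φy e.2) = φy e₀.2 := (congrArg Prod.snd heq)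
        have hex : ∃ w ∈ vx, φx w = gx (φx e.1) := ⟨e₀.1, h2.1, hgx.symm⟩
        have hey : ∃ y' ∈ vy, φy y' = gy (φy e.2) := ⟨e₀.2, h2.2, hgy.symm⟩
        have hFxe : Fx e.1 = e₀.1 := by
          rw [hFxdef]
          simp only [dif_pos hex]
          apply hinjx hex.choose_spec.1 h2.1
          rw [hex.choose_spec.2, hgx]
        have hFye : Fy e.2 = e₀.2 := by
          rw [hFydef]
          simp only [dif_pos hey]
          apply hinjy hey.choose_spec.1 h2.2
          rw [hey.choose_spec.2, hgy]
        refine ⟨by rw [hFxe, hFye]; exact he₀, ⟨a, ?_⟩, ⟨b, ?_⟩⟩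
        · -- Fx e.1 = wa a
          rw [hFxe]
          apply hinjx h2.1 (hwa1 a)
          rw [hwa2 a, ← ha, hgx]
        · rw [hFye]
          apply hinjy h2.2 (hyb1 b)
          rw [hyb2 b, ← hb, hgy]
      · intro a
        have hga : gx (φx (wa a)) = φx (wa a) := by rw [hwa2]; exact hfa a
        have hex : ∃ w ∈ vx, φx w = gx (φx (wa a)) := ⟨wa a, hwa1 a, hga.symm⟩
        rw [hFxdef]
        simp only [dif_pos hex]
        apply hinjx hex.choose_spec.1 (hwa1 a)
        rw [hex.choose_spec.2, hga]
      · intro b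
        have hgb : gy (φy (yb b)) = φy (yb b) := by rw [hyb2]; exact hfb b
        have hey : ∃ y' ∈ vy, φy y' = gy (φy (yb b)) := ⟨yb b, hyb1 b, hgb.symm⟩
        rw [hFydef]
        simp only [dif_pos hey]
        apply hinjy hey.choose_spec.1 (hyb1 b)
        rw [hey.choose_spec.2, hgb]
  | double X Y vx vy E ox oy k hox hoy h ih =>
      intro hreal
      apply ih
      obtain ⟨A, B, fx, fy, hA, hB, hpat, hret, hfa, hfb⟩ := hreal
      -- the doubled edge set
      set S : Set ((X ⊕ X) × (Y ⊕ Y)) :=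
        ({ e' | ∃ e ∈ E, e' = (Sum.inl e.1, Sum.inl e.2) } ∪
         { e' | ∃ e ∈ E, (e.1 ∈ ox ∨ e.2 ∈ oy) ∧
            ((e.1 ∈ ox ∧ e'.1 = Sum.inr e.1) ∨ (e.1 ∉ ox ∧ e'.1 = Sum.inl e.1)) ∧
            ((e.2 ∈ oy ∧ e'.2 = Sum.inr e.2) ∨ (e.2 ∉ oy ∧ e'.2 = Sum.inl e.2)) }) with hS
      -- helper membership lemmas
      have memS_A : ∀ e ∈ E, ((Sum.inl e.1 : X ⊕ X), (Sum.inl e.2 : Y ⊕ Y)) ∈ S :=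
        fun e he => Or.inl ⟨e, he, rfl⟩
      have projS : ∀ p ∈ S, ((Sum.elim id id p.1 : X), (Sum.elim id id p.2 : Y)) ∈ E := by
        rintro p (⟨e, he, rfl⟩ | ⟨e, he, _, hx, hy⟩)
        · simpa using he
        · have hx' : Sum.elim id id p.1 = e.1 := by
            rcases hx with ⟨_, hp⟩ | ⟨_, hp⟩ <;> rw [hp] <;> rfl
          have hy' : Sum.elim id id p.2 = e.2 := by
            rcases hy with ⟨_, hp⟩ | ⟨_, hp⟩ <;> rw [hp] <;> rfl
          rw [hx', hy']
          simpa using he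
      have no_li : ∀ (w : X) (y : Y), ((Sum.inl w, Sum.inr y) : (X ⊕ X) × (Y ⊕ Y)) ∈ S → w ∉ ox := by
        rintro w y (⟨e, he, heq⟩ | ⟨e, he, _, hx, hy⟩)
        · have := congrArg Prod.snd heq
          simp at this
        · rcases hx with ⟨hm, hp⟩ | ⟨hm, hp⟩
          · simp at hp
          · simp only [Sum.inl.injEq] at hp
            rwa [hp]
      have no_ri : ∀ (w : X) (y : Y), ((Sum.inr w, Sum.inl y) : (X ⊕ X) × (Y ⊕ Y)) ∈ S → y ∉ oy := by
        rintro w y (⟨e, he, heq⟩ | ⟨e, he, _, hx, hy⟩)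
        · have := congrArg Prod.fst heq
          simp at this
        · rcases hy with ⟨hm, hp⟩ | ⟨hm, hp⟩
          · simp at hp
          · simp only [Sum.inl.injEq] at hp
            rwa [hp]
      -- shadows
      set wa : Fin 6 → X := fun a => Sum.elim id id (A a) with hwadef
      set yb : Fin 6 → Y := fun b => Sum.elim id id (B b) with hybdef
      have hclassA : ∀ a, (∃ w, w ∈ vx ∧ A a = Sum.inl w) ∨ (∃ w, w ∈ ox ∧ A a = Sum.inr w) := by
        intro a
        rcases hA a with ⟨w, hw, hww⟩ | ⟨w, hw, hww⟩
        · exact Or.inl ⟨w, hw, hww.symm⟩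
        · exact Or.inr ⟨w, hw, hww.symm⟩
      have hclassB : ∀ b, (∃ y, y ∈ vy ∧ B b = Sum.inl y) ∨ (∃ y, y ∈ oy ∧ B b = Sum.inr y) := by
        intro b
        rcases hB b with ⟨y, hy, hyy⟩ | ⟨y, hy, hyy⟩
        · exact Or.inl ⟨y, hy, hyy.symm⟩
        · exact Or.inr ⟨y, hy, hyy.symm⟩
      have hwa_vx : ∀ a, wa a ∈ vx := by
        intro a
        rcases hclassA a with ⟨w, hw, he⟩ | ⟨w, hw, he⟩
        · rw [hwadef]; simp only [he, Sum.elim_inl, id_eq]; exact hw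
        · rw [hwadef]; simp only [he, Sum.elim_inr, id_eq]; exact hox hw
      have hyb_vy : ∀ b, yb b ∈ vy := by
        intro b
        rcases hclassB b with ⟨y, hy, he⟩ | ⟨y, hy, he⟩
        · rw [hybdef]; simp only [he, Sum.elim_inl, id_eq]; exact hy
        · rw [hybdef]; simp only [he, Sum.elim_inr, id_eq]; exact hoy hy
      have Ainj : ∀ a a', A a = A a' → a = a' := by
        intro a a' he
        apply rows_distinct
        intro b
        rw [← hpat a b, ← hpat a' b, he]
      have Binj : ∀ b b', B b = B b' → b = b' := by
        intro b b' he
        apply cols_distinct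
        intro a
        rw [← hpat a b, ← hpat a b', he]
      have hshadowE : ∀ a b, e12 a b → (wa a, yb b) ∈ E := by
        intro a b hab
        have h1 := (hpat a b).mpr hab
        exact projS _ h1
      -- the key construction: a section giving a realization downstairs
      have key : ∀ (sx : X → X ⊕ X) (sy : Y → Y ⊕ Y),
          (∀ e ∈ E, ((sx e.1, sy e.2) : (X ⊕ X) × (Y ⊕ Y)) ∈ S) →
          (∀ a, fx (sx (wa a)) = A a) → (∀ b, fy (sy (yb b)) = B b) →
          Realizes X Y vx vy E := by
        intro sx sy hs hfA hfB
        refine ⟨wa, yb, fun x => Sum.elim id id (fx (sx x)), fun y => Sum.elim id id (fy (sy y)),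
          hwa_vx, hyb_vy, ?_, ?_, ?_, ?_⟩
        · intro a b
          constructor
          · intro he
            have h1 := hs (wa a, yb b) he
            have h2 := (hret _ h1).1
            simp only at h2
            rw [hfA a, hfB b] at h2
            exact (hpat a b).mp h2
          · intro hab
            exact hshadowE a b hab
        · intro e he
          have h1 := hs e he
          obtain ⟨h2, ⟨a, ha⟩, ⟨b, hb⟩⟩ := hret _ h1
          simp only at h2 ha hb
          refine ⟨?_, ⟨a, ?_⟩, ⟨b, ?_⟩⟩
          · have h3 := projS _ h2
            simpa using h3
          · show Sum.elim id id (fx (sx e.1)) = wa a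
            rw [ha, hwadef]
          · show Sum.elim id id (fy (sy e.2)) = yb b
            rw [hb, hybdef]
        · intro a
          show Sum.elim id id (fx (sx (wa a))) = wa a
          rw [hfA a, hwadef]
        · intro b
          show Sum.elim id id (fy (sy (yb b))) = yb b
          rw [hfB b, hybdef]
      -- constructing the endomorphism indices for a given section
      have mk_m : ∀ (sx : X → X ⊕ X) (sy : Y → Y ⊕ Y),
          (∀ e ∈ E, ((sx e.1, sy e.2) : (X ⊕ X) × (Y ⊕ Y)) ∈ S) →
          ∃ ma : Fin 6 → Fin 6, ∃ mb : Fin 6 → Fin 6,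
            (∀ a, fx (sx (wa a)) = A (ma a)) ∧ (∀ b, fy (sy (yb b)) = B (mb b)) ∧
            (∀ a b, e12 a b → e12 (ma a) (mb b)) := by
        intro sx sy hs
        have hex : ∀ a : Fin 6, ∃ a', fx (sx (wa a)) = A a' := by
          intro a
          have h1 := hs _ (hshadowE a a (e12_refl a))
          have h2 := (hret _ h1).2.1
          simpa using h2
        have hey : ∀ b : Fin 6, ∃ b', fy (sy (yb b)) = B b' := by
          intro b
          have h1 := hs _ (hshadowE b b (e12_refl b))
          have h2 := (hret _ h1).2.2
          simpa using h2
        refine ⟨fun a => (hex a).choose, fun b => (hey b).choose,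
          fun a => (hex a).choose_spec, fun b => (hey b).choose_spec, ?_⟩
        intro a b hab
        have h1 := hs _ (hshadowE a b hab)
        have h2 := (hret _ h1).1
        simp only at h2
        rw [(hex a).choose_spec, (hey b).choose_spec] at h2
        exact (hpat _ _).mp h2
      -- class predicates
      classical
      set RXp : Fin 6 → Prop := fun a => ∃ w, A a = Sum.inr w with hRXp
      set RYp : Fin 6 → Prop := fun b => ∃ y, B b = Sum.inr y with hRYp
      set LoXp : Fin 6 → Prop := fun a => ∃ w, w ∈ ox ∧ A a = Sum.inl w with hLoXp
      set LoYp : Fin 6 → Prop := fun b => ∃ y, y ∈ oy ∧ B b = Sum.inl y with hLoYp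
      have hC1 : ∀ a b, LoXp a → RYp b → ¬ e12 a b := by
        rintro a b ⟨w, hw, hwa⟩ ⟨y, hby⟩ hab
        have h1 := (hpat a b).mpr hab
        rw [hwa, hby] at h1
        exact no_li w y h1 hw
      have hC1' : ∀ a b, RXp a → LoYp b → ¬ e12 a b := by
        rintro a b ⟨w, hwa⟩ ⟨y, hy, hby⟩ hab
        have h1 := (hpat a b).mpr hab
        rw [hwa, hby] at h1
        exact no_ri w y h1 hy
      -- branch 1 prerequisites (section = Sum.inl)
      have inl_fix : ∀ a, ¬ RXp a → (Sum.inl (wa a) : X ⊕ X) = A a := by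
        intro a hra
        rcases hclassA a with ⟨w, _, he⟩ | ⟨w, _, he⟩
        · rw [hwadef]; simp only [he, Sum.elim_inl, id_eq]
        · exact absurd ⟨w, he⟩ hra
      have inl_fiy : ∀ b, ¬ RYp b → (Sum.inl (yb b) : Y ⊕ Y) = B b := by
        intro b hrb
        rcases hclassB b with ⟨y, _, he⟩ | ⟨y, _, he⟩
        · rw [hybdef]; simp only [he, Sum.elim_inl, id_eq]
        · exact absurd ⟨y, he⟩ hrb
      -- branch 2 prerequisites (section = "all old to inr")
      set sxo : X → X ⊕ X := fun x => if x ∈ ox then Sum.inr x else Sum.inl x with hsxo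
      set syo : Y → Y ⊕ Y := fun y => if y ∈ oy then Sum.inr y else Sum.inl y with hsyo
      have memS_s : ∀ e ∈ E, ((sxo e.1, syo e.2) : (X ⊕ X) × (Y ⊕ Y)) ∈ S := by
        intro e he
        by_cases h1 : e.1 ∈ ox <;> by_cases h2 : e.2 ∈ oy
        · exact Or.inr ⟨e, he, Or.inl h1,
            Or.inl ⟨h1, by rw [hsxo]; simp [h1]⟩, Or.inl ⟨h2, by rw [hsyo]; simp [h2]⟩⟩
        · exact Or.inr ⟨e, he, Or.inl h1,
            Or.inl ⟨h1, by rw [hsxo]; simp [h1]⟩, Or.inr ⟨h2, by rw [hsyo]; simp [h2]⟩⟩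
        · exact Or.inr ⟨e, he, Or.inr h2,
            Or.inr ⟨h1, by rw [hsxo]; simp [h1]⟩, Or.inl ⟨h2, by rw [hsyo]; simp [h2]⟩⟩
        · have hx : sxo e.1 = Sum.inl e.1 := by rw [hsxo]; simp [h1]
          have hy : syo e.2 = Sum.inl e.2 := by rw [hsyo]; simp [h2]
          rw [hx, hy]
          exact memS_A e he
      have sxo_fix : ∀ a, ¬ LoXp a → sxo (wa a) = A a := by
        intro a hla
        rcases hclassA a with ⟨w, hw, he⟩ | ⟨w, hw, he⟩
        · have hwo : w ∉ ox := fun hc => hla ⟨w, hc, he⟩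
          have hwaw : wa a = w := by rw [hwadef]; simp only [he, Sum.elim_inl, id_eq]
          rw [hwaw, hsxo]
          simp [hwo, he]
        · have hwaw : wa a = w := by rw [hwadef]; simp only [he, Sum.elim_inr, id_eq]
          rw [hwaw, hsxo]
          simp [hw, he]
      have syo_fix : ∀ b, ¬ LoYp b → syo (yb b) = B b := by
        intro b hlb
        rcases hclassB b with ⟨y, hy, he⟩ | ⟨y, hy, he⟩
        · have hyo : y ∉ oy := fun hc => hlb ⟨y, hc, he⟩
          have hyby : yb b = y := by rw [hybdef]; simp only [he, Sum.elim_inl, id_eq]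
          rw [hyby, hsyo]
          simp [hyo, he]
        · have hyby : yb b = y := by rw [hybdef]; simp only [he, Sum.elim_inr, id_eq]
          rw [hyby, hsyo]
          simp [hy, he]
      -- counting
      set RXs : Finset (Fin 6) := Finset.univ.filter RXp with hRXs
      set RYs : Finset (Fin 6) := Finset.univ.filter RYp with hRYs
      set LoXs : Finset (Fin 6) := Finset.univ.filter LoXp with hLoXs
      set LoYs : Finset (Fin 6) := Finset.univ.filter LoYp with hLoYs
      by_cases hcRX : RXs.card ≤ 1
      · -- branch 1a: at most one inr row; section inl; rigX
        obtain ⟨r, hr⟩ := Finset.card_le_one_iff_subset_singleton.mp hcRX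
        obtain ⟨ma, mb, hmaS, hmbS, hendo⟩ := mk_m Sum.inl Sum.inl memS_A
        have hma' : ∀ a, a ≠ r → ma a = a := by
          intro a har
          have hnra : ¬ RXp a := by
            intro hra
            have : a ∈ RXs := by rw [hRXs]; simp [hra]
            have := hr this
            simp at this
            exact har this
          apply Ainj
          rw [← hmaS a, inl_fix a hnra, hfa a]
        obtain ⟨hida, hidb⟩ := rigX r ma mb hma' hendo
        apply key Sum.inl Sum.inl memS_A
        · intro a; rw [hmaS a, hida a]
        · intro b; rw [hmbS b, hidb b]
      · by_cases hcRY : RYs.card ≤ 1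
        · -- branch 1b: rigY
          obtain ⟨r, hr⟩ := Finset.card_le_one_iff_subset_singleton.mp hcRY
          obtain ⟨ma, mb, hmaS, hmbS, hendo⟩ := mk_m Sum.inl Sum.inl memS_A
          have hmb' : ∀ b, b ≠ r → mb b = b := by
            intro b hbr
            have hnrb : ¬ RYp b := by
              intro hrb
              have : b ∈ RYs := by rw [hRYs]; simp [hrb]
              have := hr this
              simp at this
              exact hbr this
            apply Binj
            rw [← hmbS b, inl_fiy b hnrb, hfb b]
          obtain ⟨hida, hidb⟩ := rigY r ma mb hmb' hendo
          apply key Sum.inl Sum.inl memS_A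
          · intro a; rw [hmaS a, hida a]
          · intro b; rw [hmbS b, hidb b]
        · by_cases hcLX : LoXs.card ≤ 1
          · -- branch 2a: section sxo; rigX with movables LoX
            obtain ⟨r, hr⟩ := Finset.card_le_one_iff_subset_singleton.mp hcLX
            obtain ⟨ma, mb, hmaS, hmbS, hendo⟩ := mk_m sxo syo memS_s
            have hma' : ∀ a, a ≠ r → ma a = a := by
              intro a har
              have hnla : ¬ LoXp a := by
                intro hla
                have : a ∈ LoXs := by rw [hLoXs]; simp [hla]
                have := hr this
                simp at this
                exact har this
              apply Ainj
              rw [← hmaS a, sxo_fix a hnla, hfa a]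
            obtain ⟨hida, hidb⟩ := rigX r ma mb hma' hendo
            apply key sxo syo memS_s
            · intro a; rw [hmaS a, hida a]
            · intro b; rw [hmbS b, hidb b]
          · by_cases hcLY : LoYs.card ≤ 1
            · -- branch 2b
              obtain ⟨r, hr⟩ := Finset.card_le_one_iff_subset_singleton.mp hcLY
              obtain ⟨ma, mb, hmaS, hmbS, hendo⟩ := mk_m sxo syo memS_s
              have hmb' : ∀ b, b ≠ r → mb b = b := by
                intro b hbr
                have hnlb : ¬ LoYp b := by
                  intro hlb
                  have : b ∈ LoYs := by rw [hLoYs]; simp [hlb]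
                  have := hr this
                  simp at this
                  exact hbr this
                apply Binj
                rw [← hmbS b, syo_fix b hnlb, hfb b]
              obtain ⟨hida, hidb⟩ := rigY r ma mb hmb' hendo
              apply key sxo syo memS_s
              · intro a; rw [hmaS a, hida a]
              · intro b; rw [hmbS b, hidb b]
            · -- impossible: two rows in LoX and two columns in RY
              exfalso
              have h2LX : 1 < LoXs.card := lt_of_not_ge hcLX
              have h2RY : 1 < RYs.card := lt_of_not_ge hcRY
              obtain ⟨a, haM, a', haM', hane⟩ := Finset.one_lt_card.mp h2LX
              obtain ⟨b, hbM, b', hbM', hbne⟩ := Finset.one_lt_card.mp h2RY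
              have hla : LoXp a := by rw [hLoXs] at haM; simpa using haM
              have hla' : LoXp a' := by rw [hLoXs] at haM'; simpa using haM'
              have hrb : RYp b := by rw [hRYs] at hbM; simpa using hbM
              have hrb' : RYp b' := by rw [hRYs] at hbM'; simpa using hbM'
              exact window4 a a' b b' hane hbne
                (hC1 a b hla hrb) (hC1 a b' hla hrb')
                (hC1 a' b hla' hrb) (hC1 a' b' hla' hrb')



def eX (a : Fin 6) : {u : Fin 12 // u.val % 2 = 0} :=
  ⟨⟨2 * a.val, by omega⟩, by show (2*a.val) % 2 = 0; omega⟩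
def eY (b : Fin 6) : {u : Fin 12 // u.val % 2 = 1} :=
  ⟨⟨2 * b.val + 1, by omega⟩, by show (2*b.val+1) % 2 = 1; omega⟩

lemma target_pat : ∀ a b : Fin 6, ((eX a, eY b) ∈ shortcutEdges) ↔ e12 a b := by decide

lemma eX_surj : ∀ x : {u : Fin 12 // u.val % 2 = 0}, ∃ a, eX a = x := by decide
lemma eY_surj : ∀ y : {u : Fin 12 // u.val % 2 = 1}, ∃ b, eY b = y := by decide

lemma target_realizes :
    Realizes {u : Fin 12 // u.val % 2 = 0} {u : Fin 12 // u.val % 2 = 1}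
      Set.univ Set.univ (↑shortcutEdges : Set _) := by
  refine ⟨eX, eY, id, id, fun a => trivial, fun b => trivial, ?_, ?_, fun a => rfl, fun b => rfl⟩
  · intro a b
    rw [Finset.mem_coe]
    exact target_pat a b
  · intro e he
    refine ⟨?_, ?_, ?_⟩
    · simpa using he
    · obtain ⟨a, ha⟩ := eX_surj e.1
      exact ⟨a, ha.symm⟩
    · obtain ⟨b, hb⟩ := eY_surj e.2
      exact ⟨b, hb.symm⟩

end C12proof

/-- The cycle with shortcuts `𝔠_12` is not constructible by conditioning. -/
theorem statement17 :
    ¬ ∃ k, ConstructibleBip {u : Fin 12 // u.val % 2 = 0} {u : Fin 12 // u.val % 2 = 1}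
      Set.univ Set.univ (↑shortcutEdges : Set _) k := by
  rintro ⟨k, h⟩
  exact C12proof.no_real h C12proof.target_realizes
end

section
/- Let Q̄ be an r-prover question set and let r' := |Q̄|. Then for every n ≥ 1, ω^CPR_Q̄(n) ≥ ω^HJ_{r'}(n): the minimum color-value of the n-fold repetition of a coloring game with question set Q̄ and color-value at least 2 is at least the minimum number of colors needed to color [r']^n with no monochromatic combinatorial line. -/
/-- The color-value of a coloring game: the minimum, over strategies, of the number
of distinct outputs of `V` as the question tuple ranges over `Qbar`. -/
noncomputable def colorValue {r : ℕ} {Q A : Fin r → Type} {X : Type} [DecidableEq X]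
    (Qbar : Finset (∀ j, Q j)) (V : (∀ j, Q j) → (∀ j, A j) → X) : ℕ :=
  sInf { c : ℕ | ∃ S : ∀ j, Q j → A j,
    c = (Qbar.image fun q => V q fun j => S j (q j)).card }

/-- The color-value of the `n`-fold parallel repetition of a coloring game: the output
on a question vector is the vector of the `n` coordinate-wise outputs of `V`. -/
noncomputable def colorRepValue {r : ℕ} {Q A : Fin r → Type} {X : Type} [DecidableEq X]
    [∀ j, DecidableEq (Q j)]
    (n : ℕ) (Qbar : Finset (∀ j, Q j)) (V : (∀ j, Q j) → (∀ j, A j) → X) : ℕ :=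
  sInf { c : ℕ | ∃ S : ∀ j, (Fin n → Q j) → (Fin n → A j),
    c = ((Fintype.piFinset fun _ : Fin n => Qbar).image fun q =>
      fun i => V (q i) fun j => S j (fun i' => q i' j) i).card }

/-- `ω^CPR_Q̄(n)`: the minimum of `cVal(Gⁿ)` over all coloring games `G` with question
set `Qbar` (finite nonempty answer alphabets, arbitrary output set) and `cVal(G) ≥ 2`. -/
noncomputable def omegaCPR {r : ℕ} {Q : Fin r → Type} [∀ j, DecidableEq (Q j)]
    (Qbar : Finset (∀ j, Q j)) (n : ℕ) : ℕ :=
  sInf { c : ℕ | ∃ (A : Fin r → Type) (_ : ∀ j, Fintype (A j)) (_ : ∀ j, Nonempty (A j))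
    (X : Type) (iX : DecidableEq X) (V : (∀ j, Q j) → (∀ j, A j) → X),
      2 ≤ @colorValue r Q A X iX Qbar V ∧ c = @colorRepValue r Q A X iX _ n Qbar V }

/-- The coloring `C` of `[r]^n` has a monochromatic combinatorial line. -/
def HasMonoLine {r n : ℕ} {X : Type} (C : (Fin n → Fin r) → X) : Prop :=
  ∃ b : Fin n → Option (Fin r), (∃ i, b i = none) ∧
    ∀ q q' : Fin r, C (fun i => (b i).getD q) = C (fun i => (b i).getD q')

/-- `ω^HJ_r(n)`: the minimum number of colors `c` admitting a coloring of `[r]^n`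
with no monochromatic combinatorial line. -/
noncomputable def omegaHJ (r n : ℕ) : ℕ :=
  sInf { c : ℕ | ∃ C : (Fin n → Fin r) → Fin c, ¬ HasMonoLine C }

lemma key_lemma {r : ℕ} {Q A : Fin r → Type} {X : Type} [iX : DecidableEq X]
    [∀ j, DecidableEq (Q j)] [iNA : ∀ j, Nonempty (A j)]
    (Qbar : Finset (∀ j, Q j)) (hne : Qbar.Nonempty)
    (V : (∀ j, Q j) → (∀ j, A j) → X)
    (hV : 2 ≤ colorValue Qbar V) (n : ℕ) :
    omegaHJ Qbar.card n ≤ colorRepValue n Qbar V := by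
  have hSne : { c : ℕ | ∃ S : ∀ j, (Fin n → Q j) → (Fin n → A j),
      c = ((Fintype.piFinset fun _ : Fin n => Qbar).image fun q =>
        fun i => V (q i) fun j => S j (fun i' => q i' j) i).card }.Nonempty :=
    ⟨_, ⟨fun j _ _ => Classical.arbitrary _, rfl⟩⟩
  obtain ⟨S, hS⟩ := Nat.sInf_mem hSne
  have hrep : colorRepValue n Qbar V =
      ((Fintype.piFinset fun _ : Fin n => Qbar).image fun q =>
        fun i => V (q i) fun j => S j (fun i' => q i' j) i).card := hS
  rw [hrep]
  set I := ((Fintype.piFinset fun _ : Fin n => Qbar).image fun q =>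
      fun i => V (q i) fun j => S j (fun i' => q i' j) i) with hI
  let e : Fin Qbar.card → (∀ j, Q j) := fun p => (Qbar.equivFin.symm p : {x // x ∈ Qbar})
  have he : ∀ p, e p ∈ Qbar := fun p => (Qbar.equivFin.symm p).2
  let v : (Fin n → Fin Qbar.card) → (Fin n → X) := fun x i =>
    V (e (x i)) fun j => S j (fun i' => e (x i') j) i
  have hv : ∀ x, v x ∈ I := by
    intro x
    refine Finset.mem_image.mpr ⟨fun i => e (x i), ?_, rfl⟩
    exact Fintype.mem_piFinset.mpr fun i => he _
  let C : (Fin n → Fin Qbar.card) → Fin I.card := fun x => I.equivFin ⟨v x, hv x⟩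
  refine Nat.sInf_le ⟨C, ?_⟩
  rintro ⟨b, ⟨i₀, hi₀⟩, hmono⟩
  -- build a single-round strategy from the monochromatic line
  let T : ∀ j, Q j → A j := fun j x =>
    S j (fun i' => match b i' with | none => x | some s => e s j) i₀
  have hkey : ∀ p : Fin Qbar.card,
      V (e p) (fun j => T j (e p j)) = v (fun i => (b i).getD p) i₀ := by
    intro p
    show V (e p) _ = V (e ((b i₀).getD p)) _
    rw [hi₀]
    simp only [Option.getD_none]
    congr 1
    funext j
    show S j _ i₀ = S j _ i₀
    congr 1
    funext i'
    cases hb : b i' <;> simp [hb]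
  have hconst : ∀ p p' : Fin Qbar.card,
      V (e p) (fun j => T j (e p j)) = V (e p') (fun j => T j (e p' j)) := by
    intro p p'
    rw [hkey p, hkey p']
    have h0 : C (fun i => (b i).getD p) = C (fun i => (b i).getD p') := hmono p p'
    have h1 : v (fun i => (b i).getD p) = v (fun i => (b i).getD p') := by
      have := I.equivFin.injective h0
      exact congrArg Subtype.val this
    rw [h1]
  have hle : colorValue Qbar V ≤ 1 := by
    have h2 : colorValue Qbar V ≤ (Qbar.image fun q => V q fun j => T j (q j)).card :=
      Nat.sInf_le ⟨T, rfl⟩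
    refine h2.trans (Finset.card_le_one.mpr ?_)
    intro a ha a' ha'
    obtain ⟨q, hq, rfl⟩ := Finset.mem_image.mp ha
    obtain ⟨q', hq', rfl⟩ := Finset.mem_image.mp ha'
    have eq1 : e (Qbar.equivFin ⟨q, hq⟩) = q := by
      show ((Qbar.equivFin.symm (Qbar.equivFin ⟨q, hq⟩)) : ∀ j, Q j) = q
      rw [Equiv.symm_apply_apply]
    have eq2 : e (Qbar.equivFin ⟨q', hq'⟩) = q' := by
      show ((Qbar.equivFin.symm (Qbar.equivFin ⟨q', hq'⟩)) : ∀ j, Q j) = q'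
      rw [Equiv.symm_apply_apply]
    calc (V q fun j => T j (q j))
        = V (e (Qbar.equivFin ⟨q, hq⟩)) (fun j => T j (e (Qbar.equivFin ⟨q, hq⟩) j)) := by
          rw [eq1]
      _ = V (e (Qbar.equivFin ⟨q', hq'⟩)) (fun j => T j (e (Qbar.equivFin ⟨q', hq'⟩) j)) :=
          hconst _ _
      _ = V q' fun j => T j (q' j) := by rw [eq2]
  exact absurd (hV.trans hle) (by norm_num)

/-- For every `r`-prover question set `Q̄` with `|Q̄| = r'` and every `n ≥ 1`,
`ω^CPR_Q̄(n) ≥ ω^HJ_{r'}(n)`. -/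
theorem statement18 (r : ℕ) (Q : Fin r → Type) [∀ j, Fintype (Q j)]
    [∀ j, DecidableEq (Q j)] (Qbar : Finset (∀ j, Q j)) (hne : Qbar.Nonempty)
    (hcov : ∀ (j : Fin r) (x : Q j), ∃ q ∈ Qbar, q j = x)
    (n : ℕ) (hn : 1 ≤ n) :
    omegaHJ Qbar.card n ≤ omegaCPR Qbar n := by
  rcases Nat.lt_or_ge Qbar.card 2 with h1 | h2
  · -- trivial case: |Qbar| = 1, omegaHJ = 0
    have hcard : Qbar.card = 1 := by
      have := Finset.card_pos.mpr hne; omega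
    have hz : omegaHJ Qbar.card n = 0 := by
      rw [omegaHJ, Nat.sInf_eq_zero]
      right
      ext c
      simp only [Set.mem_setOf_eq, Set.mem_empty_iff_false, iff_false]
      rintro ⟨C, hC⟩
      refine hC ⟨fun _ => none, ⟨⟨0, hn⟩, rfl⟩, fun q q' => ?_⟩
      haveI : Subsingleton (Fin Qbar.card) := by rw [hcard]; infer_instance
      rw [Subsingleton.elim q q']
    rw [hz]; exact Nat.zero_le _
  · -- the CPR set is nonempty: use the trivial game with unit answers and V q a = q
    have iDQ : DecidableEq (∀ j, Q j) := inferInstance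
    have hcv : 2 ≤ @colorValue r Q (fun _ => PUnit) (∀ j, Q j) iDQ Qbar
        (fun q _ => q) := by
      rw [colorValue]
      refine le_csInf ⟨Qbar.card, fun _ _ => PUnit.unit, by simp⟩ ?_
      rintro c ⟨S, rfl⟩
      calc 2 ≤ Qbar.card := h2
        _ = _ := by simp
    have hCPRne : { c : ℕ | ∃ (A : Fin r → Type) (_ : ∀ j, Fintype (A j))
        (_ : ∀ j, Nonempty (A j)) (X : Type) (iX : DecidableEq X)
        (V : (∀ j, Q j) → (∀ j, A j) → X),
          2 ≤ @colorValue r Q A X iX Qbar V ∧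
          c = @colorRepValue r Q A X iX _ n Qbar V }.Nonempty :=
      ⟨@colorRepValue r Q (fun _ => PUnit) (∀ j, Q j) iDQ _ n Qbar (fun q _ => q),
        fun _ => PUnit, fun _ => inferInstance, fun _ => inferInstance,
        (∀ j, Q j), iDQ, fun q _ => q, hcv, rfl⟩
    obtain ⟨A, iFA, iNA, X, iX, V, hV2, hceq⟩ := Nat.sInf_mem hCPRne
    have : omegaCPR Qbar n = @colorRepValue r Q A X iX _ n Qbar V := hceq
    rw [this]
    exact @key_lemma r Q A X iX _ iNA Qbar hne V hV2 n
end

section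
/- Let r ≥ 3. Then for every n ≥ 1, ω^HJ_r(n) ≥ ω^CPR_{Q̄_r}(n): the minimum number of colors needed to color [r]^n with no monochromatic combinatorial line is at least the minimum color-value of the n-fold repetition of a coloring game with question set Q̄_r and color-value at least 2. -/
/-- The question set `Q̄_r ⊆ {0,1}^r`: tuples with exactly one coordinate equal to 1. -/
def QbarR (r : ℕ) : Finset (Fin r → Bool) :=
  Finset.univ.filter fun q => (Finset.univ.filter fun j => q j = true).card = 1

/-! ### Auxiliary material -/

/-- The unit question tuple `e_k`. -/
def eQ {r : ℕ} (k : Fin r) : Fin r → Bool := fun j => decide (j = k)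

lemma eQ_self {r : ℕ} (k : Fin r) : eQ k k = true := by simp [eQ]

lemma eQ_ne {r : ℕ} {k j : Fin r} (h : j ≠ k) : eQ k j = false := by simp [eQ, h]

lemma eQ_mem {r : ℕ} (k : Fin r) : eQ k ∈ QbarR r := by
  simp only [QbarR, Finset.mem_filter, Finset.mem_univ, true_and]
  have h : (Finset.univ.filter fun j => eQ k j = true) = {k} := by
    ext j; simp [eQ]
  rw [h, Finset.card_singleton]

lemma mem_QbarR {r : ℕ} {q : Fin r → Bool} (h : q ∈ QbarR r) : ∃! j, q j = true := by
  simp only [QbarR, Finset.mem_filter, Finset.mem_univ, true_and] at h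
  obtain ⟨a, ha⟩ := Finset.card_eq_one.mp h
  refine ⟨a, ?_, ?_⟩
  · have : a ∈ Finset.univ.filter fun j => q j = true := ha ▸ Finset.mem_singleton_self a
    exact (Finset.mem_filter.mp this).2
  · intro y hy
    have hy' : y ∈ Finset.univ.filter fun j => q j = true :=
      Finset.mem_filter.mpr ⟨Finset.mem_univ _, hy⟩
    rw [ha] at hy'
    exact Finset.mem_singleton.mp hy'

/-- Existence of an index avoiding two given ones, for `r ≥ 3`. -/
lemma exists_ne2 {r : ℕ} (hr : 3 ≤ r) (j j' : Fin r) : ∃ k : Fin r, k ≠ j ∧ k ≠ j' := by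
  by_contra h
  push_neg at h
  have hsub : (Finset.univ : Finset (Fin r)) ⊆ {j, j'} := by
    intro k _
    by_cases hk : k = j
    · simp [hk]
    · simp [h k hk]
  have h1 := Finset.card_le_card hsub
  have h2 : ({j, j'} : Finset (Fin r)).card ≤ 2 := by
    refine le_trans (Finset.card_insert_le _ _) ?_
    simp
  rw [Finset.card_univ, Fintype.card_fin] at h1
  omega

open Classical in
/-- The verification function of the game built from a coloring `C`.
Each prover answers a claimed support set together with a claimed coordinate.
The verifier checks that the sets partition `[n]`, that all claimed coordinates agree,
and that the active prover's set contains the claimed coordinate; on success it outputs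
the color of the decoded word, otherwise it outputs the question as a tag. -/
noncomputable def gameV {r n c : ℕ} (C : (Fin n → Fin r) → Fin c)
    (q : Fin r → Bool) (a : Fin r → ((Fin n → Bool) × Fin n)) :
    Sum (Fin c) (Fin r → Bool) :=
  if h : (∀ p : Fin n, ∃! j : Fin r, (a j).1 p = true) ∧
      (∀ j j' : Fin r, (a j).2 = (a j').2) ∧
      (∀ j : Fin r, q j = true → (a j).1 ((a j).2) = true) then
    Sum.inl (C fun p => (h.1 p).choose)
  else
    Sum.inr q

lemma two_le_colorValue_gameV {r n c : ℕ} (hr : 3 ≤ r) (hn : 1 ≤ n)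
    (C : (Fin n → Fin r) → Fin c) (hC : ¬ HasMonoLine C) :
    2 ≤ colorValue (Q := fun _ : Fin r => Bool)
      (A := fun _ : Fin r => (Fin n → Bool) × Fin n) (QbarR r) (gameV C) := by
  classical
  have hne : {cc : ℕ | ∃ S : ∀ _ : Fin r, Bool → ((Fin n → Bool) × Fin n),
      cc = ((QbarR r).image fun q => gameV C q fun j => S j (q j)).card}.Nonempty :=
    ⟨_, ⟨fun _ _ => ((fun _ => false), ⟨0, hn⟩), rfl⟩⟩
  obtain ⟨S, hS⟩ := Nat.sInf_mem hne
  have hS' : colorValue (Q := fun _ : Fin r => Bool)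
      (A := fun _ : Fin r => (Fin n → Bool) × Fin n) (QbarR r) (gameV C)
      = ((QbarR r).image fun q => gameV C q fun j => S j (q j)).card := hS
  rw [hS']
  by_contra hlt
  push_neg at hlt
  have hone : ∀ x ∈ ((QbarR r).image fun q => gameV C q fun j => S j (q j)),
      ∀ y ∈ ((QbarR r).image fun q => gameV C q fun j => S j (q j)), x = y :=
    Finset.card_le_one.mp (Nat.lt_succ_iff.mp hlt)
  have hval : ∀ k k' : Fin r,
      gameV C (eQ k) (fun j => S j (eQ k j)) = gameV C (eQ k') (fun j => S j (eQ k' j)) :=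
    fun k k' => hone _ (Finset.mem_image_of_mem _ (eQ_mem k))
      _ (Finset.mem_image_of_mem _ (eQ_mem k'))
  -- all checks pass at every question
  have hpass : ∀ k : Fin r,
      (∀ p : Fin n, ∃! j : Fin r, (S j (eQ k j)).1 p = true) ∧
      (∀ j j' : Fin r, (S j (eQ k j)).2 = (S j' (eQ k j')).2) ∧
      (∀ j : Fin r, eQ k j = true → (S j (eQ k j)).1 ((S j (eQ k j)).2) = true) := by
    intro k
    by_contra hcond
    obtain ⟨k', hk'1, -⟩ := exists_ne2 hr k k
    have e1 : gameV C (eQ k) (fun j => S j (eQ k j)) = Sum.inr (eQ k) := by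
      unfold gameV
      exact dif_neg hcond
    by_cases hcond' :
        (∀ p : Fin n, ∃! j : Fin r, (S j (eQ k' j)).1 p = true) ∧
        (∀ j j' : Fin r, (S j (eQ k' j)).2 = (S j' (eQ k' j')).2) ∧
        (∀ j : Fin r, eQ k' j = true → (S j (eQ k' j)).1 ((S j (eQ k' j)).2) = true)
    · have e2 : gameV C (eQ k') (fun j => S j (eQ k' j))
          = Sum.inl (C fun p => (hcond'.1 p).choose) := by
        unfold gameV
        exact dif_pos hcond'
      have := hval k k'
      rw [e1, e2] at this
      simp at this
    · have e2 : gameV C (eQ k') (fun j => S j (eQ k' j)) = Sum.inr (eQ k') := by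
        unfold gameV
        exact dif_neg hcond'
      have h3 := hval k k'
      rw [e1, e2] at h3
      have h4 := congrFun (Sum.inr.inj h3) k'
      rw [eQ_self, eQ_ne hk'1] at h4
      exact Bool.noConfusion h4
  -- three distinct indices
  obtain ⟨k0, k1, k2, h01, h02, h12⟩ :
      ∃ k0 k1 k2 : Fin r, k0 ≠ k1 ∧ k0 ≠ k2 ∧ k1 ≠ k2 := by
    refine ⟨⟨0, Nat.lt_of_lt_of_le (by norm_num) hr⟩,
      ⟨1, Nat.lt_of_lt_of_le (by norm_num) hr⟩,
      ⟨2, Nat.lt_of_lt_of_le (by norm_num) hr⟩, ?_, ?_, ?_⟩ <;>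
      simp [Fin.ext_iff]
  -- all claimed coordinates are equal to a common `m`
  have hm : ∀ k j : Fin r, j ≠ k → (S k true).2 = (S j false).2 := by
    intro k j hjk
    have h := (hpass k).2.1 k j
    rwa [eQ_self, eQ_ne hjk] at h
  obtain ⟨m, hmdef⟩ : ∃ m : Fin n, (S k2 false).2 = m := ⟨_, rfl⟩
  have hm1 : ∀ k : Fin r, (S k true).2 = m := by
    intro k
    by_cases hk : k = k2
    · rw [hk]
      calc (S k2 true).2 = (S k0 false).2 := hm k2 k0 h02
        _ = (S k1 true).2 := (hm k1 k0 h01).symm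
        _ = (S k2 false).2 := hm k1 k2 (Ne.symm h12)
        _ = m := hmdef
    · calc (S k true).2 = (S k2 false).2 := hm k k2 (fun h => hk h.symm)
        _ = m := hmdef
  have hm0 : ∀ j : Fin r, (S j false).2 = m := by
    intro j
    by_cases hj : j = k0
    · rw [hj, ← hm k1 k0 h01]
      exact hm1 k1
    · rw [← hm k0 j hj]
      exact hm1 k0
  -- the active prover's set contains m
  have hU : ∀ k : Fin r, (S k true).1 m = true := by
    intro k
    have h := (hpass k).2.2 k (eQ_self k)
    rw [eQ_self] at h
    rwa [hm1 k] at h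
  -- no inactive set contains m
  have hT : ∀ j : Fin r, (S j false).1 m = false := by
    intro j
    obtain ⟨k, hkj, -⟩ := exists_ne2 hr j j
    by_contra hbt
    rw [Bool.not_eq_false] at hbt
    have hu := (hpass k).1 m
    have e1 : (S k (eQ k k)).1 m = true := by rw [eQ_self]; exact hU k
    have e2 : (S j (eQ k j)).1 m = true := by rw [eQ_ne (Ne.symm hkj)]; exact hbt
    exact (Ne.symm hkj) (hu.unique e2 e1)
  -- inactive sets are pairwise disjoint
  have hdisj : ∀ j j' : Fin r, ∀ p : Fin n,
      (S j false).1 p = true → (S j' false).1 p = true → j = j' := by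
    intro j j' p h1 h2
    obtain ⟨k, hkj, hkj'⟩ := exists_ne2 hr j j'
    refine (hpass k).1 p |>.unique ?_ ?_
    · show (S j (eQ k j)).1 p = true
      rw [eQ_ne (Ne.symm hkj)]; exact h1
    · show (S j' (eQ k j')).1 p = true
      rw [eQ_ne (Ne.symm hkj')]; exact h2
  -- the combinatorial pattern
  set b : Fin n → Option (Fin r) :=
    fun p => if h : ∃ j : Fin r, (S j false).1 p = true then some h.choose else none with hbdef
  have hbm : b m = none := by
    rw [hbdef]
    refine dif_neg ?_
    rintro ⟨j, hj⟩
    rw [hT j] at hj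
    exact Bool.noConfusion hj
  -- the decoded word at question e_k is the line point b(k)
  have hline : ∀ (k : Fin r) (p : Fin n), ((hpass k).1 p).choose = (b p).getD k := by
    intro k p
    have hspec : (S (((hpass k).1 p).choose) (eQ k (((hpass k).1 p).choose))).1 p = true :=
      ((hpass k).1 p).choose_spec.1
    by_cases h : ∃ j : Fin r, (S j false).1 p = true
    · have hbp : b p = some h.choose := by rw [hbdef]; exact dif_pos h
      rw [hbp, Option.getD_some]
      have hj0p : (S h.choose false).1 p = true := h.choose_spec
      by_cases hj0k : h.choose = k
      · by_cases hjk : ((hpass k).1 p).choose = k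
        · rw [hjk, hj0k]
        · rw [eQ_ne hjk] at hspec
          exact hdisj _ _ p hspec hj0p
      · refine (((hpass k).1 p).choose_spec.2 h.choose ?_).symm
        show (S h.choose (eQ k h.choose)).1 p = true
        rw [eQ_ne hj0k]
        exact hj0p
    · have hbp : b p = none := by rw [hbdef]; exact dif_neg h
      rw [hbp, Option.getD_none]
      by_contra hjk
      rw [eQ_ne hjk] at hspec
      exact h ⟨_, hspec⟩
  -- monochromatic line, contradiction
  have e1 : ∀ u : Fin r, gameV C (eQ u) (fun j => S j (eQ u j))
      = Sum.inl (C fun p => (b p).getD u) := by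
    intro u
    have h0 : gameV C (eQ u) (fun j => S j (eQ u j))
        = Sum.inl (C fun p => ((hpass u).1 p).choose) := by
      unfold gameV
      exact dif_pos (hpass u)
    rw [h0]
    exact congrArg Sum.inl (congrArg C (funext fun p => hline u p))
  refine hC ⟨b, ⟨m, hbm⟩, ?_⟩
  intro u u'
  have h3 := hval u u'
  rw [e1 u, e1 u'] at h3
  exact Sum.inl.inj h3

lemma colorRepValue_gameV_le {r n c : ℕ} (C : (Fin n → Fin r) → Fin c) :
    colorRepValue (Q := fun _ : Fin r => Bool)
      (A := fun _ : Fin r => (Fin n → Bool) × Fin n) n (QbarR r) (gameV C) ≤ c := by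
  classical
  have hmem : ((Fintype.piFinset fun _ : Fin n => QbarR r).image fun q =>
        fun i => gameV C (q i) fun j => ((fun i' => q i' j), i)).card ∈
      {cc : ℕ | ∃ S : ∀ _ : Fin r, (Fin n → Bool) → (Fin n → ((Fin n → Bool) × Fin n)),
        cc = ((Fintype.piFinset fun _ : Fin n => QbarR r).image fun q =>
          fun i => gameV C (q i) fun j => S j (fun i' => q i' j) i).card} :=
    ⟨fun _ x i => (x, i), rfl⟩
  have step1 : colorRepValue (Q := fun _ : Fin r => Bool)
      (A := fun _ : Fin r => (Fin n → Bool) × Fin n) n (QbarR r) (gameV C)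
      ≤ ((Fintype.piFinset fun _ : Fin n => QbarR r).image fun q =>
        fun i => gameV C (q i) fun j => ((fun i' => q i' j), i)).card :=
    Nat.sInf_le hmem
  refine le_trans step1 ?_
  have hsub : ((Fintype.piFinset fun _ : Fin n => QbarR r).image fun q =>
      fun i => gameV C (q i) fun j => ((fun i' => q i' j), i))
      ⊆ Finset.univ.image fun col : Fin c =>
        (fun _ : Fin n => (Sum.inl col : Sum (Fin c) (Fin r → Bool))) := by
    intro v hv
    obtain ⟨q, hq, rfl⟩ := Finset.mem_image.mp hv
    rw [Fintype.mem_piFinset] at hq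
    have hex : ∀ p : Fin n, ∃! j : Fin r, q p j = true := fun p => mem_QbarR (hq p)
    refine Finset.mem_image.mpr ⟨C fun p => (hex p).choose, Finset.mem_univ _, ?_⟩
    funext i
    have hcond : (∀ p : Fin n, ∃! j : Fin r, q p j = true) ∧
        (∀ _ _ : Fin r, i = i) ∧ (∀ j : Fin r, q i j = true → q i j = true) :=
      ⟨hex, fun _ _ => rfl, fun _ hj => hj⟩
    have h0 : gameV C (q i) (fun j => ((fun i' => q i' j), i))
        = Sum.inl (C fun p => (hex p).choose) := by
      unfold gameV
      exact dif_pos hcond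
    exact h0.symm
  refine le_trans (Finset.card_le_card hsub) ?_
  refine le_trans (Finset.card_image_le) ?_
  simp

/-- For `r ≥ 3` and `n ≥ 1`, `ω^HJ_r(n) ≥ ω^CPR_{Q̄_r}(n)`. -/
theorem statement19 (r : ℕ) (hr : 3 ≤ r) (n : ℕ) (hn : 1 ≤ n) :
    omegaCPR (QbarR r) n ≤ omegaHJ r n := by
  classical
  have hne : {cc : ℕ | ∃ C : (Fin n → Fin r) → Fin cc, ¬ HasMonoLine C}.Nonempty := by
    refine ⟨Fintype.card (Fin n → Fin r), Fintype.equivFin _, ?_⟩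
    rintro ⟨b, ⟨i0, hi0⟩, hmono⟩
    have h01 := hmono ⟨0, Nat.lt_of_lt_of_le (by norm_num) hr⟩
      ⟨1, Nat.lt_of_lt_of_le (by norm_num) hr⟩
    have h2 := (Fintype.equivFin _).injective h01
    have h3 := congrFun h2 i0
    rw [hi0] at h3
    simp only [Option.getD_none] at h3
    have h4 : (0 : ℕ) = 1 := congrArg Fin.val h3
    exact absurd h4 (by norm_num)
  have hCmem : omegaHJ r n ∈
      {cc : ℕ | ∃ C : (Fin n → Fin r) → Fin cc, ¬ HasMonoLine C} := Nat.sInf_mem hne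
  obtain ⟨C, hC⟩ := hCmem
  have key1 : omegaCPR (QbarR r) n ≤ colorRepValue (Q := fun _ : Fin r => Bool)
      (A := fun _ : Fin r => (Fin n → Bool) × Fin n) n (QbarR r) (gameV C) := by
    apply Nat.sInf_le
    exact ⟨(fun _ => (Fin n → Bool) × Fin n), (fun _ => inferInstance),
      (fun _ => ⟨((fun _ => false), ⟨0, hn⟩)⟩),
      Sum (Fin (omegaHJ r n)) (Fin r → Bool), inferInstance, gameV C,
      two_le_colorValue_gameV hr hn C hC, rfl⟩
  exact le_trans key1 (colorRepValue_gameV_le C)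
end
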